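/- arXiv:1905.05083 — 9 statements merged into one kernel-verified Lean document; each statement's English description precedes it below -/
import Mathlib

section
/- Let D be a strongly connected digraph without loops on at least 3 vertices. Then the line digraph LD of D admits a (1,≤1)-identifying code; that is, for every pair of distinct vertices e and f of LD, the closed in-neighbourhoods N^-[e] and N^-[f] in LD are distinct. -/
/-- The (open) in-neighbourhood of `v` in the digraph with adjacency relation `A`. -/
def Nminus {V : Type*} (A : V → V → Prop) (v : V) : Set V := {u | A u v}

/-- The out-neighbourhood of `v`. -/
def Nplus {V : Type*} (A : V → V → Prop) (v : V) : Set V := {u | A v u}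

/-- The closed in-neighbourhood `N^-[v] = {v} ∪ N^-(v)`. -/
def NminusClosed {V : Type*} (A : V → V → Prop) (v : V) : Set V := insert v (Nminus A v)

/-- `N^-[S] = ⋃_{v ∈ S} N^-[v]`. -/
def NminusSet {V : Type*} (A : V → V → Prop) (S : Set V) : Set V := ⋃ v ∈ S, NminusClosed A v

/-- A digraph is strongly connected if there is a directed path between any ordered
pair of vertices. -/
def StronglyConnected {V : Type*} (A : V → V → Prop) : Prop :=
  ∀ u v : V, Relation.ReflTransGen A u v

/-- The vertices of the line digraph of `A` are the arcs of `A`. -/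
abbrev LineVertex {V : Type*} (A : V → V → Prop) : Type _ := {e : V × V // A e.1 e.2}

/-- Adjacency in the line digraph: there is an arc from `uv` to `wz` iff `v = w`. -/
def LineAdj {V : Type*} (A : V → V → Prop) (e f : LineVertex A) : Prop := e.val.2 = f.val.1

/-- A digraph admits a `(1,≤ℓ)`-identifying code iff all distinct nonempty vertex subsets of
cardinality at most `ℓ` have distinct closed in-neighbourhoods. -/
def AdmitsIdCode {W : Type*} (R : W → W → Prop) (ℓ : ℕ) : Prop :=
  ∀ X Y : Set W, X.Nonempty → Y.Nonempty → X.ncard ≤ ℓ → Y.ncard ≤ ℓ → X ≠ Y →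
    NminusSet R X ≠ NminusSet R Y

/-- `C` is a `(1,≤1)`-identifying code: a dominating set separating closed
in-neighbourhoods of distinct vertices. -/
def IsIdCode {W : Type*} (R : W → W → Prop) (C : Set W) : Prop :=
  (∀ v : W, v ∈ C ∨ ∃ u ∈ C, R u v) ∧
  ∀ x y : W, x ≠ y → NminusClosed R x ∩ C ≠ NminusClosed R y ∩ C

/-- The identifying number: minimum size of a `(1,≤1)`-identifying code. -/
noncomputable def idNumber {W : Type*} (R : W → W → Prop) : ℕ :=
  sInf {n | ∃ C : Set W, IsIdCode R C ∧ C.ncard = n}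

/-- The set of arcs of `A` with head `v`. -/
def omegaMinus {V : Type*} (A : V → V → Prop) (v : V) : Set (V × V) :=
  {p | A p.1 p.2 ∧ p.2 = v}

/-- The set of arcs of `A` with tail `v`. -/
def omegaPlus {V : Type*} (A : V → V → Prop) (v : V) : Set (V × V) :=
  {p | A p.1 p.2 ∧ p.1 = v}

/-- `C` is an arc-identifying code of the digraph `A`: an arc-dominating and
arc-separating set of arcs. -/
def IsArcIdCode {V : Type*} (A : V → V → Prop) (C : Set (V × V)) : Prop :=
  (∀ p : V × V, A p.1 p.2 → ((insert p (omegaMinus A p.1)) ∩ C).Nonempty) ∧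
  ∀ p q : V × V, A p.1 p.2 → A q.1 q.2 → p ≠ q →
    (insert p (omegaMinus A p.1)) ∩ C ≠ (insert q (omegaMinus A q.1)) ∩ C

/-- Vertices of the Kautz digraph `K(d,k)`: words of length `k` over an alphabet of
`d+1` symbols with no two consecutive symbols equal. -/
def KautzVertex (d k : ℕ) : Type :=
  {x : Fin k → Fin (d + 1) // ∀ i j : Fin k, (j : ℕ) = (i : ℕ) + 1 → x i ≠ x j}

/-- Adjacency in the Kautz digraph: there is an arc from `x₁x₂…x_k` to `x₂…x_k y`. -/
def KautzAdj (d k : ℕ) (x y : KautzVertex d k) : Prop :=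
  ∀ i j : Fin k, (j : ℕ) = (i : ℕ) + 1 → y.val i = x.val j

/-- The line digraph of a strongly connected loopless digraph on at least 3 vertices
admits a `(1,≤1)`-identifying code: distinct vertices have distinct closed
in-neighbourhoods. -/
theorem line_digraph_admits_id_code {V : Type*} (A : V → V → Prop)
    (hloop : ∀ v : V, ¬ A v v) (hsc : StronglyConnected A)
    (hcard : ∃ x y z : V, x ≠ y ∧ x ≠ z ∧ y ≠ z) :
    ∀ e f : LineVertex A, e ≠ f →
      NminusClosed (LineAdj A) e ≠ NminusClosed (LineAdj A) f := by
  rintro ⟨⟨a, b⟩, hab⟩ ⟨⟨c, d⟩, hcd⟩ hne h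
  -- e ∈ N^-[f] gives b = c ; f ∈ N^-[e] gives d = a
  have he : (⟨(a, b), hab⟩ : LineVertex A) ∈ NminusClosed (LineAdj A) ⟨(c, d), hcd⟩ := by
    rw [← h]; exact Set.mem_insert _ _
  have hf : (⟨(c, d), hcd⟩ : LineVertex A) ∈ NminusClosed (LineAdj A) ⟨(a, b), hab⟩ := by
    rw [h]; exact Set.mem_insert _ _
  have hbc : b = c := by
    rcases he with he | he
    · exact absurd he hne
    · exact he
  have hda : d = a := by
    rcases hf with hf | hf
    · exact absurd hf.symm hne
    · exact hf
  subst hbc; subst hda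
  have hab' : d ≠ b := fun hh => hloop d (hh ▸ hab)
  -- the only arc into d is (b, d)
  have claim1 : ∀ u, A u d → u = b := by
    intro u hu
    have hg : (⟨(u, d), hu⟩ : LineVertex A) ∈ NminusClosed (LineAdj A) ⟨(d, b), hab⟩ :=
      Set.mem_insert_of_mem _ (rfl : LineAdj A ⟨(u, d), hu⟩ ⟨(d, b), hab⟩)
    rw [h] at hg
    rcases hg with hg | hg
    · exact congrArg (fun p => p.val.1) hg
    · exact absurd hg hab'
  -- the only arc into b is (d, b)
  have claim2 : ∀ u, A u b → u = d := by
    intro u hu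
    have hg : (⟨(u, b), hu⟩ : LineVertex A) ∈ NminusClosed (LineAdj A) ⟨(b, d), hcd⟩ :=
      Set.mem_insert_of_mem _ (rfl : LineAdj A ⟨(u, b), hu⟩ ⟨(b, d), hcd⟩)
    rw [← h] at hg
    rcases hg with hg | hg
    · exact congrArg (fun p => p.val.1) hg
    · exact absurd hg (Ne.symm hab')
  -- every vertex that reaches d is d or b
  have reach : ∀ u, Relation.ReflTransGen A u d → u = d ∨ u = b := by
    intro u hu
    induction hu using Relation.ReflTransGen.head_induction_on with
    | refl => exact Or.inl rfl
    | head h' _ ih =>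
      rcases ih with rfl | rfl
      · exact Or.inr (claim1 _ h')
      · exact Or.inl (claim2 _ h')
  obtain ⟨x, y, z, hxy, hxz, hyz⟩ := hcard
  have hw : ∃ w : V, w ≠ d ∧ w ≠ b := by
    by_contra hcon
    push_neg at hcon
    have hx : x = d ∨ x = b := or_iff_not_imp_left.mpr (hcon x)
    have hy : y = d ∨ y = b := or_iff_not_imp_left.mpr (hcon y)
    have hz : z = d ∨ z = b := or_iff_not_imp_left.mpr (hcon z)
    rcases hx with rfl | rfl <;> rcases hy with hy | hy <;> rcases hz with hz | hz <;>
      simp_all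
  obtain ⟨w, hwa, hwb⟩ := hw
  rcases reach w (hsc w d) with rfl | rfl
  · exact hwa rfl
  · exact hwb rfl
end

section
/- Let LD be the line digraph of a strongly connected digraph D without loops, with V(D) finite. Suppose LD is not isomorphic to a directed 4-cycle and that no vertex of LD of in-degree 1 lies on a digon. Then LD admits a (1,≤2)-identifying code if and only if all three of the following hold: (i) LD contains no directed 3-cycle having at least two vertices of in-degree 1; (ii) there do not exist four distinct vertices x, x', y, y' of LD such that N^-(x) = {y, y'}, N^-(y') = {x'}, and x ∈ N^-(x') ∩ N^-(y); (iii) there do not exist four distinct vertices x, x', y, y' of LD such that N^-(x) = {y, y'}, N^-(y) = {x, x'}, and N^-(x') ∩ N^-(y') ≠ ∅. -/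
section AuxIdCode

/-! ### Auxiliary lemmas for the characterization theorem -/

namespace IdCodeAux

variable {V : Type*} {A : V → V → Prop}

lemma mem_single_iff {W : Type*} (R : W → W → Prop) (a f : W) :
    f ∈ NminusSet R {a} ↔ f = a ∨ R f a := by
  simp [NminusSet, NminusClosed, Nminus]

lemma mem_pair_iff {W : Type*} (R : W → W → Prop) (a b f : W) :
    f ∈ NminusSet R {a, b} ↔ f = a ∨ R f a ∨ f = b ∨ R f b := by
  simp only [NminusSet, NminusClosed, Nminus, Set.mem_iUnion, Set.mem_insert_iff,
    Set.mem_singleton_iff, Set.mem_setOf_eq, exists_prop]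
  constructor
  · rintro ⟨v, (rfl | rfl), (rfl | hv)⟩ <;> tauto
  · rintro (rfl | h | rfl | h)
    exacts [⟨_, Or.inl rfl, Or.inl rfl⟩, ⟨a, Or.inl rfl, Or.inr h⟩,
      ⟨_, Or.inr rfl, Or.inl rfl⟩, ⟨b, Or.inr rfl, Or.inr h⟩]

lemma loopfree (hloop : ∀ v : V, ¬ A v v) (e : LineVertex A) : e.val.2 ≠ e.val.1 := by
  intro h
  have he := e.prop
  rw [h] at he
  exact hloop e.val.1 he

lemma exists_into (hloop : ∀ v : V, ¬ A v v) (hsc : StronglyConnected A) (e : LineVertex A) :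
    ∃ f : LineVertex A, f.val.2 = e.val.1 := by
  rcases (hsc e.val.2 e.val.1).cases_tail with h | ⟨c, _, hc⟩
  · exact absurd h.symm (loopfree hloop e)
  · exact ⟨⟨(c, e.val.1), hc⟩, rfl⟩

lemma nminus_eq_singleton {g f : LineVertex A} (hf : LineAdj A f g)
    (h : ∀ f' : LineVertex A, LineAdj A f' g → f' = f) :
    Nminus (LineAdj A) g = {f} :=
  Set.eq_singleton_iff_unique_mem.mpr ⟨hf, h⟩

lemma nminus_eq_pair {g u v : LineVertex A} (hu : LineAdj A u g) (hv : LineAdj A v g)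
    (h : ∀ f : LineVertex A, LineAdj A f g → f = u ∨ f = v) :
    Nminus (LineAdj A) g = {u, v} := by
  ext f
  simp only [Set.mem_insert_iff, Set.mem_singleton_iff]
  exact ⟨fun hf => h f hf, by rintro (rfl | rfl) <;> assumption⟩

lemma ncard_one {g f : LineVertex A} (h : Nminus (LineAdj A) g = {f}) :
    (Nminus (LineAdj A) g).ncard = 1 := by
  rw [h]; exact Set.ncard_singleton f

lemma digon_contra
    (hdigon : ∀ e : LineVertex A, (Nminus (LineAdj A) e).ncard = 1 →
      ¬ ∃ f : LineVertex A, LineAdj A e f ∧ LineAdj A f e)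
    {f g : LineVertex A} (hfg : LineAdj A f g) (hgf : LineAdj A g f)
    (hN : Nminus (LineAdj A) g = {f}) : False :=
  hdigon g (ncard_one hN) ⟨f, hgf, hfg⟩

lemma transfer {a b c d f : LineVertex A}
    (heq : NminusSet (LineAdj A) {a, b} = NminusSet (LineAdj A) {c, d})
    (hf : f = a ∨ LineAdj A f a ∨ f = b ∨ LineAdj A f b) :
    f = c ∨ LineAdj A f c ∨ f = d ∨ LineAdj A f d :=
  (mem_pair_iff _ c d f).1 (heq ▸ (mem_pair_iff _ a b f).2 hf)

lemma arc_ext {e f : LineVertex A} (h1 : e.val.1 = f.val.1) (h2 : e.val.2 = f.val.2) :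
    e = f := Subtype.ext (Prod.ext_iff.mpr ⟨h1, h2⟩)


lemma pair_ncard_le {W : Type*} (z x : W) : ({z, x} : Set W).ncard ≤ 2 :=
  le_trans (Set.ncard_insert_le z {x}) (by simp)

lemma fwd_i (hloop : ∀ v : V, ¬ A v v) (hcode : AdmitsIdCode (LineAdj A) 2)
    {x y z : LineVertex A} (hxy : LineAdj A x y) (hyz : LineAdj A y z) (hzx : LineAdj A z x)
    (hx1 : (Nminus (LineAdj A) x).ncard = 1) (hy1 : (Nminus (LineAdj A) y).ncard = 1) :
    False := by
  have hxyne : x ≠ y := by intro h; subst h; exact loopfree hloop x hxy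
  have hyzne : y ≠ z := by intro h; subst h; exact loopfree hloop y hyz
  have hzxne : z ≠ x := by intro h; subst h; exact loopfree hloop z hzx
  have hNx : Nminus (LineAdj A) x = {z} := by
    obtain ⟨w, hw⟩ := Set.ncard_eq_one.mp hx1
    have hz' : z ∈ Nminus (LineAdj A) x := hzx
    rw [hw] at hz'
    obtain rfl : w = z := (Set.mem_singleton_iff.mp hz').symm
    exact hw
  have hNy : Nminus (LineAdj A) y = {x} := by
    obtain ⟨w, hw⟩ := Set.ncard_eq_one.mp hy1
    have hz' : x ∈ Nminus (LineAdj A) y := hxy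
    rw [hw] at hz'
    obtain rfl : w = x := (Set.mem_singleton_iff.mp hz').symm
    exact hw
  have e1 : ∀ f, LineAdj A f x ↔ f = z := by
    intro f
    rw [show (LineAdj A f x) = (f ∈ Nminus (LineAdj A) x) from rfl, hNx]
    exact Set.mem_singleton_iff
  have e2 : ∀ f, LineAdj A f y ↔ f = x := by
    intro f
    rw [show (LineAdj A f y) = (f ∈ Nminus (LineAdj A) y) from rfl, hNy]
    exact Set.mem_singleton_iff
  have hne : ({z, x} : Set (LineVertex A)) ≠ {z, y} := by
    intro h
    have hx' : x ∈ ({z, y} : Set (LineVertex A)) := h ▸ Set.mem_insert_of_mem _ rfl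
    rcases Set.mem_insert_iff.mp hx' with h' | h'
    · exact hzxne h'.symm
    · exact hxyne (Set.mem_singleton_iff.mp h')
  have heq : NminusSet (LineAdj A) {z, x} = NminusSet (LineAdj A) {z, y} := by
    ext f
    rw [mem_pair_iff, mem_pair_iff]
    constructor
    · rintro (rfl | h | rfl | h)
      · exact Or.inl rfl
      · exact Or.inr (Or.inl h)
      · exact Or.inr (Or.inr (Or.inr hxy))
      · exact Or.inl ((e1 f).mp h)
    · rintro (rfl | h | rfl | h)
      · exact Or.inl rfl
      · exact Or.inr (Or.inl h)
      · exact Or.inr (Or.inl hyz)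
      · exact Or.inr (Or.inr (Or.inl ((e2 f).mp h)))
  exact absurd heq
    (hcode {z, x} {z, y} ⟨z, Set.mem_insert _ _⟩ ⟨z, Set.mem_insert _ _⟩
      (pair_ncard_le z x) (pair_ncard_le z y) hne)

lemma fwd_ii (hcode : AdmitsIdCode (LineAdj A) 2) {x x' y y' : LineVertex A}
    (n1 : x ≠ x') (n2 : x ≠ y) (n3 : x ≠ y') (n4 : x' ≠ y) (n5 : x' ≠ y') (n6 : y ≠ y')
    (hNx : Nminus (LineAdj A) x = {y, y'}) (hNy' : Nminus (LineAdj A) y' = {x'})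
    (hxx' : LineAdj A x x') (hxy : LineAdj A x y) : False := by
  have hE : ∀ f, LineAdj A f x' ↔ LineAdj A f y := by
    intro f
    constructor <;> intro h
    · exact h.trans ((hxx' : x.val.2 = x'.val.1).symm.trans hxy)
    · exact h.trans ((hxy : x.val.2 = y.val.1).symm.trans hxx')
  have e1 : ∀ f, LineAdj A f x ↔ (f = y ∨ f = y') := by
    intro f
    rw [show (LineAdj A f x) = (f ∈ Nminus (LineAdj A) x) from rfl, hNx]
    simp
  have e2 : ∀ f, LineAdj A f y' ↔ f = x' := by
    intro f
    rw [show (LineAdj A f y') = (f ∈ Nminus (LineAdj A) y') from rfl, hNy']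
    exact Set.mem_singleton_iff
  have hne : ({x, x'} : Set (LineVertex A)) ≠ {y, y'} := by
    intro h
    have hx'' : x ∈ ({y, y'} : Set (LineVertex A)) := h ▸ Set.mem_insert _ _
    rcases Set.mem_insert_iff.mp hx'' with h' | h'
    · exact n2 h'
    · exact n3 (Set.mem_singleton_iff.mp h')
  have heq : NminusSet (LineAdj A) {x, x'} = NminusSet (LineAdj A) {y, y'} := by
    ext f
    rw [mem_pair_iff, mem_pair_iff]
    constructor
    · rintro (rfl | h | rfl | h)
      · exact Or.inr (Or.inl hxy)
      · rcases (e1 f).mp h with rfl | rfl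
        · exact Or.inl rfl
        · exact Or.inr (Or.inr (Or.inl rfl))
      · exact Or.inr (Or.inr (Or.inr ((e2 f).mpr rfl)))
      · exact Or.inr (Or.inl ((hE f).mp h))
    · rintro (rfl | h | rfl | h)
      · exact Or.inr (Or.inl ((e1 f).mpr (Or.inl rfl)))
      · exact Or.inr (Or.inr (Or.inr ((hE f).mpr h)))
      · exact Or.inr (Or.inl ((e1 f).mpr (Or.inr rfl)))
      · rcases (e2 f).mp h with rfl
        exact Or.inr (Or.inr (Or.inl rfl))
  exact absurd heq
    (hcode _ _ ⟨x, Set.mem_insert _ _⟩ ⟨y, Set.mem_insert _ _⟩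
      (pair_ncard_le x x') (pair_ncard_le y y') hne)

lemma fwd_iii (hcode : AdmitsIdCode (LineAdj A) 2) {x x' y y' : LineVertex A}
    (n1 : x ≠ x') (n2 : x ≠ y) (n3 : x ≠ y') (n4 : x' ≠ y) (n5 : x' ≠ y') (n6 : y ≠ y')
    (hNx : Nminus (LineAdj A) x = {y, y'}) (hNy : Nminus (LineAdj A) y = {x, x'})
    (w : LineVertex A) (hw1 : LineAdj A w x') (hw2 : LineAdj A w y') : False := by
  have hE : ∀ f, LineAdj A f x' ↔ LineAdj A f y' := by
    intro f
    constructor <;> intro h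
    · exact h.trans ((hw1 : w.val.2 = x'.val.1).symm.trans hw2)
    · exact h.trans ((hw2 : w.val.2 = y'.val.1).symm.trans hw1)
  have e1 : ∀ f, LineAdj A f x ↔ (f = y ∨ f = y') := by
    intro f
    rw [show (LineAdj A f x) = (f ∈ Nminus (LineAdj A) x) from rfl, hNx]
    simp
  have e2 : ∀ f, LineAdj A f y ↔ (f = x ∨ f = x') := by
    intro f
    rw [show (LineAdj A f y) = (f ∈ Nminus (LineAdj A) y) from rfl, hNy]
    simp
  have hne : ({x, x'} : Set (LineVertex A)) ≠ {y, y'} := by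
    intro h
    have hx'' : x ∈ ({y, y'} : Set (LineVertex A)) := h ▸ Set.mem_insert _ _
    rcases Set.mem_insert_iff.mp hx'' with h' | h'
    · exact n2 h'
    · exact n3 (Set.mem_singleton_iff.mp h')
  have heq : NminusSet (LineAdj A) {x, x'} = NminusSet (LineAdj A) {y, y'} := by
    ext f
    rw [mem_pair_iff, mem_pair_iff]
    constructor
    · rintro (rfl | h | rfl | h)
      · exact Or.inr (Or.inl ((e2 f).mpr (Or.inl rfl)))
      · rcases (e1 f).mp h with rfl | rfl
        · exact Or.inl rfl
        · exact Or.inr (Or.inr (Or.inl rfl))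
      · exact Or.inr (Or.inl ((e2 f).mpr (Or.inr rfl)))
      · exact Or.inr (Or.inr (Or.inr ((hE f).mp h)))
    · rintro (rfl | h | rfl | h)
      · exact Or.inr (Or.inl ((e1 f).mpr (Or.inl rfl)))
      · rcases (e2 f).mp h with rfl | rfl
        · exact Or.inl rfl
        · exact Or.inr (Or.inr (Or.inl rfl))
      · exact Or.inr (Or.inl ((e1 f).mpr (Or.inr rfl)))
      · exact Or.inr (Or.inr (Or.inr ((hE f).mpr h)))
  exact absurd heq
    (hcode _ _ ⟨x, Set.mem_insert _ _⟩ ⟨y, Set.mem_insert _ _⟩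
      (pair_ncard_le x x') (pair_ncard_le y y') hne)


lemma caseSingle (hloop : ∀ v : V, ¬ A v v) (hsc : StronglyConnected A)
    (hdigon : ∀ e : LineVertex A, (Nminus (LineAdj A) e).ncard = 1 →
      ¬ ∃ f : LineVertex A, LineAdj A e f ∧ LineAdj A f e)
    {a e : LineVertex A} {Y : Set (LineVertex A)} (heY : e ∈ Y) (hea : e ≠ a)
    (heq : NminusSet (LineAdj A) {a} = NminusSet (LineAdj A) Y) : False := by
  have key : ∀ z : LineVertex A, (z = e ∨ LineAdj A z e) → z = a ∨ LineAdj A z a := by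
    intro z hz
    have hz' : z ∈ NminusSet (LineAdj A) Y := by
      refine Set.mem_biUnion heY ?_
      rcases hz with rfl | h
      · exact Set.mem_insert _ _
      · exact Set.mem_insert_of_mem _ h
    rw [← heq] at hz'
    exact (mem_single_iff _ a z).mp hz'
  have hRea : LineAdj A e a := (key e (Or.inl rfl)).resolve_left hea
  have huniq : ∀ f : LineVertex A, LineAdj A f e → f = a := by
    intro f hf
    rcases key f (Or.inr hf) with h | hfa
    · exact h
    · exfalso
      have h1 : e.val.1 = a.val.1 := (hf : f.val.2 = e.val.1).symm.trans hfa
      exact loopfree hloop e ((hRea : e.val.2 = a.val.1).trans h1.symm)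
  obtain ⟨g, hg⟩ := exists_into hloop hsc e
  have hga := huniq g hg
  rw [hga] at hg
  exact digon_contra hdigon (show LineAdj A a e from hg) hRea (nminus_eq_singleton hg huniq)

lemma caseA2 (hloop : ∀ v : V, ¬ A v v)
    (hdigon : ∀ e : LineVertex A, (Nminus (LineAdj A) e).ncard = 1 →
      ¬ ∃ f : LineVertex A, LineAdj A e f ∧ LineAdj A f e)
    {a b d : LineVertex A} (hba : b ≠ a) (hbd : b ≠ d)
    (htb : b.val.1 = a.val.1) (htd : d.val.1 ≠ a.val.1)
    (heq : NminusSet (LineAdj A) {a, b} = NminusSet (LineAdj A) {a, d}) : False := by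
  have hb2 : b.val.2 = d.val.1 := by
    rcases transfer heq (f := b) (Or.inr (Or.inr (Or.inl rfl))) with h | h | h | h
    · exact absurd h hba
    · exact absurd ((h : b.val.2 = a.val.1).trans htb.symm) (loopfree hloop b)
    · exact absurd h hbd
    · exact h
  have hd2 : d.val.2 = b.val.1 := by
    rcases transfer heq.symm (f := d) (Or.inr (Or.inr (Or.inl rfl))) with h | h | h | h
    · exact absurd h (fun h' => htd (by rw [h']))
    · exact (h : d.val.2 = a.val.1).trans htb.symm
    · exact absurd h (Ne.symm hbd)
    · exact h
  have huniq : ∀ f : LineVertex A, LineAdj A f d → f = b := by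
    intro f hf
    rcases transfer heq.symm (f := f) (Or.inr (Or.inr (Or.inr hf))) with h | h | h | h
    · exfalso
      subst h
      exact hba (arc_ext htb ((hb2 : b.val.2 = d.val.1).trans (hf : f.val.2 = d.val.1).symm))
    · exact absurd ((hf : f.val.2 = d.val.1).symm.trans h) htd
    · exact h
    · exact absurd ((hf : f.val.2 = d.val.1).symm.trans ((h : f.val.2 = b.val.1).trans htb)) htd
  exact digon_contra hdigon (show LineAdj A b d from hb2) (show LineAdj A d b from hd2)
    (nminus_eq_singleton (show LineAdj A b d from hb2) huniq)

lemma caseA (hloop : ∀ v : V, ¬ A v v) (hsc : StronglyConnected A)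
    (hdigon : ∀ e : LineVertex A, (Nminus (LineAdj A) e).ncard = 1 →
      ¬ ∃ f : LineVertex A, LineAdj A e f ∧ LineAdj A f e)
    (hI : ¬ ∃ x y z : LineVertex A, LineAdj A x y ∧ LineAdj A y z ∧ LineAdj A z x ∧
          (((Nminus (LineAdj A) x).ncard = 1 ∧ (Nminus (LineAdj A) y).ncard = 1) ∨
           ((Nminus (LineAdj A) y).ncard = 1 ∧ (Nminus (LineAdj A) z).ncard = 1) ∨
           ((Nminus (LineAdj A) x).ncard = 1 ∧ (Nminus (LineAdj A) z).ncard = 1)))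
    {a b d : LineVertex A} (hba : b ≠ a) (hda : d ≠ a) (hbd : b ≠ d)
    (heq : NminusSet (LineAdj A) {a, b} = NminusSet (LineAdj A) {a, d}) : False := by
  classical
  by_cases htbd : b.val.1 = d.val.1
  · have hb2 : b.val.2 = a.val.1 := by
      rcases transfer heq (f := b) (Or.inr (Or.inr (Or.inl rfl))) with h | h | h | h
      · exact absurd h hba
      · exact h
      · exact absurd h hbd
      · exact absurd ((h : b.val.2 = d.val.1).trans htbd.symm) (loopfree hloop b)
    have hd2 : d.val.2 = a.val.1 := by
      rcases transfer heq.symm (f := d) (Or.inr (Or.inr (Or.inl rfl))) with h | h | h | h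
      · exact absurd h hda
      · exact h
      · exact absurd h (Ne.symm hbd)
      · exact absurd ((h : d.val.2 = b.val.1).trans htbd) (loopfree hloop d)
    exact hbd (arc_ext htbd (hb2.trans hd2.symm))
  · by_cases htba : b.val.1 = a.val.1
    · exact caseA2 hloop hdigon hba hbd htba (fun h => htbd (htba.trans h.symm)) heq
    · by_cases htda : d.val.1 = a.val.1
      · exact caseA2 hloop hdigon hda (Ne.symm hbd) htda htba heq.symm
      · -- three tails pairwise distinct
        have hb2 : b.val.2 = a.val.1 ∨ b.val.2 = d.val.1 := by
          rcases transfer heq (f := b) (Or.inr (Or.inr (Or.inl rfl))) with h | h | h | h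
          · exact absurd h hba
          · exact Or.inl h
          · exact absurd h hbd
          · exact Or.inr h
        have hd2 : d.val.2 = a.val.1 ∨ d.val.2 = b.val.1 := by
          rcases transfer heq.symm (f := d) (Or.inr (Or.inr (Or.inl rfl))) with h | h | h | h
          · exact absurd h hda
          · exact Or.inl h
          · exact absurd h (Ne.symm hbd)
          · exact Or.inr h
        have hNb : ∀ f : LineVertex A, LineAdj A f b → f = a ∨ f = d := by
          intro f hf
          rcases transfer heq (f := f) (Or.inr (Or.inr (Or.inr hf))) with h | h | h | h
          · exact Or.inl h
          · exact absurd ((hf : f.val.2 = b.val.1).symm.trans h) htba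
          · exact Or.inr h
          · exact absurd ((hf : f.val.2 = b.val.1).symm.trans h) htbd
        have hNd : ∀ f : LineVertex A, LineAdj A f d → f = a ∨ f = b := by
          intro f hf
          rcases transfer heq.symm (f := f) (Or.inr (Or.inr (Or.inr hf))) with h | h | h | h
          · exact Or.inl h
          · exact absurd ((hf : f.val.2 = d.val.1).symm.trans h) htda
          · exact Or.inr h
          · exact absurd ((hf : f.val.2 = d.val.1).symm.trans h) (fun h' => htbd h'.symm)
        obtain ⟨fb, hfb⟩ := exists_into hloop hsc b
        obtain ⟨fd, hfd⟩ := exists_into hloop hsc d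
        rcases hb2 with hb2 | hb2 <;> rcases hd2 with hd2 | hd2
        · -- b.2 = a.1, d.2 = a.1 : impossible
          have ha2 : a.val.2 = b.val.1 := by
            rcases hNb fb hfb with h | h
            · rw [← h]; exact hfb
            · exfalso
              rw [h] at hfb
              exact htba (hd2.symm.trans hfb).symm
          rcases hNd fd hfd with h | h
          · rw [h] at hfd
            exact htbd (ha2.symm.trans hfd)
          · rw [h] at hfd
            exact htda (hb2.symm.trans hfd).symm
        · -- b.2 = a.1, d.2 = b.1 : 3-cycle a → d → b → a, config (i)
          have ha2 : a.val.2 = d.val.1 := by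
            rcases hNd fd hfd with h | h
            · rw [← h]; exact hfd
            · exfalso
              rw [h] at hfd
              exact htda (hb2.symm.trans hfd).symm
          have hNd1 : Nminus (LineAdj A) d = {a} :=
            nminus_eq_singleton (show LineAdj A a d from ha2) (fun f hf => by
              rcases hNd f hf with h | h
              · exact h
              · exfalso
                rw [h] at hf
                exact htda (hb2.symm.trans hf).symm)
          have hNb1 : Nminus (LineAdj A) b = {d} :=
            nminus_eq_singleton (show LineAdj A d b from hd2) (fun f hf => by
              rcases hNb f hf with h | h
              · exfalso
                rw [h] at hf
                exact htbd (hf.symm.trans ha2)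
              · exact h)
          exact hI ⟨a, d, b, ha2, hd2, hb2, Or.inr (Or.inl ⟨ncard_one hNd1, ncard_one hNb1⟩)⟩
        · -- b.2 = d.1, d.2 = a.1 : 3-cycle a → b → d → a, config (i)
          have ha2 : a.val.2 = b.val.1 := by
            rcases hNb fb hfb with h | h
            · rw [← h]; exact hfb
            · exfalso
              rw [h] at hfb
              exact htba (hd2.symm.trans hfb).symm
          have hNb1 : Nminus (LineAdj A) b = {a} :=
            nminus_eq_singleton (show LineAdj A a b from ha2) (fun f hf => by
              rcases hNb f hf with h | h
              · exact h
              · exfalso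
                rw [h] at hf
                exact htba (hd2.symm.trans hf).symm)
          have hNd1 : Nminus (LineAdj A) d = {b} :=
            nminus_eq_singleton (show LineAdj A b d from hb2) (fun f hf => by
              rcases hNd f hf with h | h
              · exfalso
                rw [h] at hf
                exact htbd (ha2.symm.trans hf)
              · exact h)
          exact hI ⟨a, b, d, ha2, hb2, hd2, Or.inr (Or.inl ⟨ncard_one hNb1, ncard_one hNd1⟩)⟩
        · -- b.2 = d.1, d.2 = b.1 : digon b d
          by_cases hax : a.val.2 = d.val.1
          · have hNb1 : Nminus (LineAdj A) b = {d} :=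
              nminus_eq_singleton (show LineAdj A d b from hd2) (fun f hf => by
                rcases hNb f hf with h | h
                · exfalso
                  rw [h] at hf
                  exact htbd (hf.symm.trans hax)
                · exact h)
            exact digon_contra hdigon (show LineAdj A d b from hd2)
              (show LineAdj A b d from hb2) hNb1
          · have hNd1 : Nminus (LineAdj A) d = {b} :=
              nminus_eq_singleton (show LineAdj A b d from hb2) (fun f hf => by
                rcases hNd f hf with h | h
                · exfalso
                  rw [h] at hf
                  exact hax hf
                · exact h)
            exact digon_contra hdigon (show LineAdj A b d from hb2)
              (show LineAdj A d b from hd2) hNd1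


noncomputable def qm {W : Type*} (a c b d f : W) : ZMod 4 :=
  letI := Classical.decEq W
  if f = a then 0 else if f = c then 1 else if f = b then 2 else 3

noncomputable def qinv {W : Type*} (a c b d : W) (n : ZMod 4) : W :=
  if n = 0 then a else if n = 1 then c else if n = 2 then b else d

section Quad
variable {W : Type*} {a c b d : W}

lemma qm_a : qm a c b d a = 0 := by simp [qm]
lemma qm_c (h : c ≠ a) : qm a c b d c = 1 := by simp [qm, h]
lemma qm_b (h1 : b ≠ a) (h2 : b ≠ c) : qm a c b d b = 2 := by simp [qm, h1, h2]
lemma qm_d (h1 : d ≠ a) (h2 : d ≠ c) (h3 : d ≠ b) : qm a c b d d = 3 := by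
  simp [qm, h1, h2, h3]

lemma qinv_0 : qinv a c b d 0 = a := by simp [qinv]
lemma qinv_1 : qinv a c b d 1 = c := by
  rw [qinv, if_neg (by decide), if_pos rfl]
lemma qinv_2 : qinv a c b d 2 = b := by
  rw [qinv, if_neg (by decide), if_neg (by decide), if_pos rfl]
lemma qinv_3 : qinv a c b d 3 = d := by
  rw [qinv, if_neg (by decide), if_neg (by decide), if_neg (by decide)]

end Quad

lemma fourCycle (hsc : StronglyConnected A)
    {a b c d : LineVertex A}
    (hab : a ≠ b) (hac : a ≠ c) (had : a ≠ d) (hbc : b ≠ c) (hbd : b ≠ d) (hcd : c ≠ d)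
    (tab : a.val.1 ≠ b.val.1) (tac : a.val.1 ≠ c.val.1) (tad : a.val.1 ≠ d.val.1)
    (tbc : b.val.1 ≠ c.val.1) (tbd : b.val.1 ≠ d.val.1) (tcd : c.val.1 ≠ d.val.1)
    (ha2 : a.val.2 = c.val.1) (hc2 : c.val.2 = b.val.1)
    (hb2 : b.val.2 = d.val.1) (hd2 : d.val.2 = a.val.1)
    (hNa : Nminus (LineAdj A) a = {d}) (hNb : Nminus (LineAdj A) b = {c})
    (hNc : Nminus (LineAdj A) c = {a}) (hNd : Nminus (LineAdj A) d = {b}) :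
    ∃ φ : LineVertex A ≃ ZMod 4, ∀ e f : LineVertex A, LineAdj A e f ↔ φ f = φ e + 1 := by
  classical
  have cla : ∀ f : LineVertex A, f.val.2 = a.val.1 → f = d := by
    intro f h
    have hm : f ∈ Nminus (LineAdj A) a := h
    rwa [hNa, Set.mem_singleton_iff] at hm
  have clb : ∀ f : LineVertex A, f.val.2 = b.val.1 → f = c := by
    intro f h
    have hm : f ∈ Nminus (LineAdj A) b := h
    rwa [hNb, Set.mem_singleton_iff] at hm
  have clc : ∀ f : LineVertex A, f.val.2 = c.val.1 → f = a := by
    intro f h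
    have hm : f ∈ Nminus (LineAdj A) c := h
    rwa [hNc, Set.mem_singleton_iff] at hm
  have cld : ∀ f : LineVertex A, f.val.2 = d.val.1 → f = b := by
    intro f h
    have hm : f ∈ Nminus (LineAdj A) d := h
    rwa [hNd, Set.mem_singleton_iff] at hm
  have T : ∀ v : V, Relation.ReflTransGen A v a.val.1 →
      v = a.val.1 ∨ v = b.val.1 ∨ v = c.val.1 ∨ v = d.val.1 := by
    intro v hv
    induction hv using Relation.ReflTransGen.head_induction_on with
    | refl => exact Or.inl rfl
    | @head p q harc _ ih =>
        rcases ih with h | h | h | h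
        · exact Or.inr (Or.inr (Or.inr (congrArg (fun e => e.val.1) (cla ⟨(p, q), harc⟩ h))))
        · exact Or.inr (Or.inr (Or.inl (congrArg (fun e => e.val.1) (clb ⟨(p, q), harc⟩ h))))
        · exact Or.inl (congrArg (fun e => e.val.1) (clc ⟨(p, q), harc⟩ h))
        · exact Or.inr (Or.inl (congrArg (fun e => e.val.1) (cld ⟨(p, q), harc⟩ h)))
  have univ4 : ∀ f : LineVertex A, f = a ∨ f = b ∨ f = c ∨ f = d := by
    intro f
    rcases T f.val.2 (hsc _ _) with h | h | h | h
    · exact Or.inr (Or.inr (Or.inr (cla f h)))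
    · exact Or.inr (Or.inr (Or.inl (clb f h)))
    · exact Or.inl (clc f h)
    · exact Or.inr (Or.inl (cld f h))
  have hba : b ≠ a := Ne.symm hab
  have hca : c ≠ a := Ne.symm hac
  have hda : d ≠ a := Ne.symm had
  have hcb : c ≠ b := Ne.symm hbc
  have hdb : d ≠ b := Ne.symm hbd
  have hdc : d ≠ c := Ne.symm hcd
  refine ⟨⟨qm a c b d, qinv a c b d, ?_, ?_⟩, ?_⟩
  · intro f
    rcases univ4 f with rfl | rfl | rfl | rfl
    · rw [qm_a, qinv_0]
    · rw [qm_b hba hbc, qinv_2]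
    · rw [qm_c hca, qinv_1]
    · rw [qm_d hda hdc hdb, qinv_3]
  · intro n
    have h4 : n = 0 ∨ n = 1 ∨ n = 2 ∨ n = 3 := by revert n; decide
    rcases h4 with rfl | rfl | rfl | rfl
    · rw [qinv_0, qm_a]
    · rw [qinv_1, qm_c hca]
    · rw [qinv_2, qm_b hba hbc]
    · rw [qinv_3, qm_d hda hdc hdb]
  · intro e f
    show LineAdj A e f ↔ qm a c b d f = qm a c b d e + 1
    rcases univ4 e with rfl | rfl | rfl | rfl <;> rcases univ4 f with rfl | rfl | rfl | rfl
    · rw [qm_a]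
      exact iff_of_false (fun h => tac (ha2.symm.trans h).symm) (by decide)
    · rw [qm_a, qm_b hba hbc]
      exact iff_of_false (fun h => tbc ((ha2.symm.trans h)).symm) (by decide)
    · rw [qm_a, qm_c hca]
      exact iff_of_true ha2 (by decide)
    · rw [qm_a, qm_d hda hdc hdb]
      exact iff_of_false (fun h => tcd (ha2.symm.trans h)) (by decide)
    · rw [qm_a, qm_b hba hbc]
      exact iff_of_false (fun h => tad (hb2.symm.trans h).symm) (by decide)
    · rw [qm_b hba hbc]
      exact iff_of_false (fun h => tbd (hb2.symm.trans h).symm) (by decide)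
    · rw [qm_b hba hbc, qm_c hca]
      exact iff_of_false (fun h => tcd (hb2.symm.trans h).symm) (by decide)
    · rw [qm_b hba hbc, qm_d hda hdc hdb]
      exact iff_of_true hb2 (by decide)
    · rw [qm_c hca, qm_a]
      exact iff_of_false (fun h => tab (hc2.symm.trans h).symm) (by decide)
    · rw [qm_c hca, qm_b hba hbc]
      exact iff_of_true hc2 (by decide)
    · rw [qm_c hca]
      exact iff_of_false (fun h => tbc (hc2.symm.trans h)) (by decide)
    · rw [qm_c hca, qm_d hda hdc hdb]
      exact iff_of_false (fun h => tbd (hc2.symm.trans h)) (by decide)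
    · rw [qm_d hda hdc hdb, qm_a]
      exact iff_of_true hd2 (by decide)
    · rw [qm_d hda hdc hdb, qm_b hba hbc]
      exact iff_of_false (fun h => tab (hd2.symm.trans h)) (by decide)
    · rw [qm_d hda hdc hdb, qm_c hca]
      exact iff_of_false (fun h => tac (hd2.symm.trans h)) (by decide)
    · rw [qm_d hda hdc hdb]
      exact iff_of_false (fun h => tad (hd2.symm.trans h)) (by decide)


lemma caseB3core (hloop : ∀ v : V, ¬ A v v)
    {a b c d : LineVertex A} (hac : a ≠ c) (had : a ≠ d) (hcb : c ≠ b)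
    (hca : c.val.1 = a.val.1) (hdb : d.val.1 = b.val.1)
    (heq : NminusSet (LineAdj A) {a, b} = NminusSet (LineAdj A) {c, d}) : False := by
  have ha2 : a.val.2 = b.val.1 := by
    rcases transfer heq (f := a) (Or.inl rfl) with h | h | h | h
    · exact absurd h hac
    · exact absurd ((h : a.val.2 = c.val.1).trans hca) (loopfree hloop a)
    · exact absurd h had
    · exact (h : a.val.2 = d.val.1).trans hdb
  have hc2 : c.val.2 = b.val.1 := by
    rcases transfer heq.symm (f := c) (Or.inl rfl) with h | h | h | h
    · exact absurd h (Ne.symm hac)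
    · exact absurd ((h : c.val.2 = a.val.1).trans hca.symm) (loopfree hloop c)
    · exact absurd h hcb
    · exact h
  exact (Ne.symm hac) (arc_ext hca (hc2.trans ha2.symm))

lemma caseB2core (hloop : ∀ v : V, ¬ A v v)
    (hdigon : ∀ e : LineVertex A, (Nminus (LineAdj A) e).ncard = 1 →
      ¬ ∃ f : LineVertex A, LineAdj A e f ∧ LineAdj A f e)
    {a b c d : LineVertex A} (hca : c ≠ a) (hcb : c ≠ b)
    (htab : a.val.1 = b.val.1) (ha2 : a.val.2 = c.val.1) (hb2 : b.val.2 = d.val.1)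
    (htcd : c.val.1 ≠ d.val.1)
    (heq : NminusSet (LineAdj A) {a, b} = NminusSet (LineAdj A) {c, d}) : False := by
  have hc2 : c.val.2 = a.val.1 := by
    rcases transfer heq.symm (f := c) (Or.inl rfl) with h | h | h | h
    · exact absurd h hca
    · exact h
    · exact absurd h hcb
    · exact (h : c.val.2 = b.val.1).trans htab.symm
  have huniq : ∀ f : LineVertex A, LineAdj A f c → f = a := by
    intro f hf
    rcases transfer heq.symm (f := f) (Or.inr (Or.inl hf)) with h | h | h | h
    · exact h
    · exact absurd (ha2.trans ((hf : f.val.2 = c.val.1).symm.trans h))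
        (loopfree hloop a)
    · exfalso
      rw [h] at hf
      exact htcd (hb2.symm.trans hf).symm
    · exact absurd (ha2.trans ((hf : f.val.2 = c.val.1).symm.trans
        ((h : f.val.2 = b.val.1).trans htab.symm))) (loopfree hloop a)
  exact digon_contra hdigon (show LineAdj A a c from ha2) (show LineAdj A c a from hc2)
    (nminus_eq_singleton (show LineAdj A a c from ha2) huniq)

lemma caseB2 (hloop : ∀ v : V, ¬ A v v)
    (hdigon : ∀ e : LineVertex A, (Nminus (LineAdj A) e).ncard = 1 →
      ¬ ∃ f : LineVertex A, LineAdj A e f ∧ LineAdj A f e)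
    {a b c d : LineVertex A} (hab : a ≠ b) (hac : a ≠ c) (had : a ≠ d)
    (hbc : b ≠ c) (hbd : b ≠ d)
    (htab : a.val.1 = b.val.1) (htcd : c.val.1 ≠ d.val.1)
    (heq : NminusSet (LineAdj A) {a, b} = NminusSet (LineAdj A) {c, d}) : False := by
  have ha' : a.val.2 = c.val.1 ∨ a.val.2 = d.val.1 := by
    rcases transfer heq (f := a) (Or.inl rfl) with h | h | h | h
    · exact absurd h hac
    · exact Or.inl h
    · exact absurd h had
    · exact Or.inr h
  have hb' : b.val.2 = c.val.1 ∨ b.val.2 = d.val.1 := by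
    rcases transfer heq (f := b) (Or.inr (Or.inr (Or.inl rfl))) with h | h | h | h
    · exact absurd h hbc
    · exact Or.inl h
    · exact absurd h hbd
    · exact Or.inr h
  rcases ha' with ha2 | ha2 <;> rcases hb' with hb2 | hb2
  · exact hab (arc_ext htab (ha2.trans hb2.symm))
  · exact caseB2core hloop hdigon (Ne.symm hac) (Ne.symm hbc) htab ha2 hb2 htcd heq
  · exact caseB2core hloop hdigon (Ne.symm had) (Ne.symm hbd) htab ha2 hb2 (Ne.symm htcd)
      (by rwa [Set.pair_comm c d] at heq)
  · exact hab (arc_ext htab (ha2.trans hb2.symm))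

lemma caseB1 (hloop : ∀ v : V, ¬ A v v) (hsc : StronglyConnected A)
    (hdigon : ∀ e : LineVertex A, (Nminus (LineAdj A) e).ncard = 1 →
      ¬ ∃ f : LineVertex A, LineAdj A e f ∧ LineAdj A f e)
    (hII : ¬ ∃ x x' y y' : LineVertex A,
          x ≠ x' ∧ x ≠ y ∧ x ≠ y' ∧ x' ≠ y ∧ x' ≠ y' ∧ y ≠ y' ∧
          Nminus (LineAdj A) x = {y, y'} ∧ Nminus (LineAdj A) y' = {x'} ∧
          x ∈ Nminus (LineAdj A) x' ∩ Nminus (LineAdj A) y)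
    (hIII : ¬ ∃ x x' y y' : LineVertex A,
          x ≠ x' ∧ x ≠ y ∧ x ≠ y' ∧ x' ≠ y ∧ x' ≠ y' ∧ y ≠ y' ∧
          Nminus (LineAdj A) x = {y, y'} ∧ Nminus (LineAdj A) y = {x, x'} ∧
          (Nminus (LineAdj A) x' ∩ Nminus (LineAdj A) y').Nonempty)
    {a b c d : LineVertex A}
    (hab : a ≠ b) (hcd : c ≠ d) (hac : a ≠ c) (had : a ≠ d) (hbc : b ≠ c) (hbd : b ≠ d)
    (hca : c.val.1 = a.val.1) (tba : b.val.1 ≠ a.val.1)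
    (tda : d.val.1 ≠ a.val.1) (tdb : d.val.1 ≠ b.val.1)
    (heq : NminusSet (LineAdj A) {a, b} = NminusSet (LineAdj A) {c, d}) : False := by
  have tdc : d.val.1 ≠ c.val.1 := fun h => tda (h.trans hca)
  have ha2 : a.val.2 = d.val.1 := by
    rcases transfer heq (f := a) (Or.inl rfl) with h | h | h | h
    · exact absurd h hac
    · exact absurd ((h : a.val.2 = c.val.1).trans hca) (loopfree hloop a)
    · exact absurd h had
    · exact h
  have hc2 : c.val.2 = b.val.1 := by
    rcases transfer heq.symm (f := c) (Or.inl rfl) with h | h | h | h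
    · exact absurd h (Ne.symm hac)
    · exact absurd ((h : c.val.2 = a.val.1).trans hca.symm) (loopfree hloop c)
    · exact absurd h (Ne.symm hbc)
    · exact h
  have hb' : b.val.2 = c.val.1 ∨ b.val.2 = d.val.1 := by
    rcases transfer heq (f := b) (Or.inr (Or.inr (Or.inl rfl))) with h | h | h | h
    · exact absurd h hbc
    · exact Or.inl h
    · exact absurd h hbd
    · exact Or.inr h
  have hd' : d.val.2 = a.val.1 ∨ d.val.2 = b.val.1 := by
    rcases transfer heq.symm (f := d) (Or.inr (Or.inr (Or.inl rfl))) with h | h | h | h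
    · exact absurd h (Ne.symm had)
    · exact Or.inl h
    · exact absurd h (Ne.symm hbd)
    · exact Or.inr h
  have hNb : ∀ f : LineVertex A, LineAdj A f b → f = c ∨ f = d := by
    intro f hf
    rcases transfer heq (f := f) (Or.inr (Or.inr (Or.inr hf))) with h | h | h | h
    · exact Or.inl h
    · exact absurd (((hf : f.val.2 = b.val.1).symm.trans h).trans hca) tba
    · exact Or.inr h
    · exact absurd ((hf : f.val.2 = b.val.1).symm.trans h) (Ne.symm tdb)
  have hNd : ∀ f : LineVertex A, LineAdj A f d → f = a ∨ f = b := by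
    intro f hf
    rcases transfer heq.symm (f := f) (Or.inr (Or.inr (Or.inr hf))) with h | h | h | h
    · exact Or.inl h
    · exact absurd ((hf : f.val.2 = d.val.1).symm.trans h) tda
    · exact Or.inr h
    · exact absurd ((hf : f.val.2 = d.val.1).symm.trans h) tdb
  rcases hb' with hb2 | hb2 <;> rcases hd' with hd2 | hd2
  · -- b.2 = c.1, d.2 = a.1 : digon b c with N⁻(b) = {c}
    have hNb1 : Nminus (LineAdj A) b = {c} :=
      nminus_eq_singleton (show LineAdj A c b from hc2) (fun f hf => by
        rcases hNb f hf with h | h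
        · exact h
        · exfalso
          rw [h] at hf
          exact tba (hd2.symm.trans hf).symm)
    exact digon_contra hdigon (show LineAdj A c b from hc2)
      (show LineAdj A b c from (hb2 : b.val.2 = c.val.1)) hNb1
  · -- b.2 = c.1, d.2 = b.1 : config (ii) with x=b, x'=a, y=c, y'=d
    have hNbp : Nminus (LineAdj A) b = {c, d} :=
      nminus_eq_pair (show LineAdj A c b from hc2) (show LineAdj A d b from hd2) hNb
    have hNd1 : Nminus (LineAdj A) d = {a} :=
      nminus_eq_singleton (show LineAdj A a d from ha2) (fun f hf => by
        rcases hNd f hf with h | h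
        · exact h
        · exfalso
          rw [h] at hf
          exact tdc (hb2.symm.trans hf).symm)
    exact hII ⟨b, a, c, d, Ne.symm hab, hbc, hbd, hac, had, hcd, hNbp, hNd1,
      show LineAdj A b a from hb2.trans hca, show LineAdj A b c from hb2⟩
  · -- b.2 = d.1, d.2 = a.1 : config (ii) with x=d, x'=c, y=a, y'=b
    have hNdp : Nminus (LineAdj A) d = {a, b} :=
      nminus_eq_pair (show LineAdj A a d from ha2) (show LineAdj A b d from hb2) hNd
    have hNb1 : Nminus (LineAdj A) b = {c} :=
      nminus_eq_singleton (show LineAdj A c b from hc2) (fun f hf => by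
        rcases hNb f hf with h | h
        · exact h
        · exfalso
          rw [h] at hf
          exact tba (hd2.symm.trans hf).symm)
    exact hII ⟨d, c, a, b, Ne.symm hcd, Ne.symm had, Ne.symm hbd, Ne.symm hac,
      Ne.symm hbc, hab, hNdp, hNb1,
      show LineAdj A d c from hd2.trans hca.symm, show LineAdj A d a from hd2⟩
  · -- b.2 = d.1, d.2 = b.1 : config (iii) with x=b, x'=a, y=d, y'=c
    obtain ⟨w, hw⟩ := exists_into hloop hsc a
    exact hIII ⟨b, a, d, c, Ne.symm hab, hbd, hbc, had, hac, Ne.symm hcd,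
      nminus_eq_pair (show LineAdj A d b from hd2) (show LineAdj A c b from hc2)
        (fun f hf => (hNb f hf).symm),
      nminus_eq_pair (show LineAdj A b d from hb2) (show LineAdj A a d from ha2)
        (fun f hf => (hNd f hf).symm),
      ⟨w, hw, (hw : w.val.2 = a.val.1).trans hca.symm⟩⟩


lemma caseB0core (hloop : ∀ v : V, ¬ A v v) (hsc : StronglyConnected A)
    (hdigon : ∀ e : LineVertex A, (Nminus (LineAdj A) e).ncard = 1 →
      ¬ ∃ f : LineVertex A, LineAdj A e f ∧ LineAdj A f e)
    (hnot4 : ¬ ∃ φ : LineVertex A ≃ ZMod 4,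
      ∀ e f : LineVertex A, LineAdj A e f ↔ φ f = φ e + 1)
    {a b c d : LineVertex A}
    (hab : a ≠ b) (hac : a ≠ c) (had : a ≠ d) (hbc : b ≠ c) (hbd : b ≠ d) (hcd : c ≠ d)
    (tab : a.val.1 ≠ b.val.1) (tac : a.val.1 ≠ c.val.1) (tad : a.val.1 ≠ d.val.1)
    (tbc : b.val.1 ≠ c.val.1) (tbd : b.val.1 ≠ d.val.1) (tcd : c.val.1 ≠ d.val.1)
    (ha2 : a.val.2 = c.val.1)
    (heq : NminusSet (LineAdj A) {a, b} = NminusSet (LineAdj A) {c, d}) : False := by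
  classical
  have hNa : ∀ f : LineVertex A, LineAdj A f a → f = c ∨ f = d := by
    intro f hf
    rcases transfer heq (f := f) (Or.inr (Or.inl hf)) with h | h | h | h
    · exact Or.inl h
    · exact absurd ((hf : f.val.2 = a.val.1).symm.trans h) tac
    · exact Or.inr h
    · exact absurd ((hf : f.val.2 = a.val.1).symm.trans h) tad
  have hNb : ∀ f : LineVertex A, LineAdj A f b → f = c ∨ f = d := by
    intro f hf
    rcases transfer heq (f := f) (Or.inr (Or.inr (Or.inr hf))) with h | h | h | h
    · exact Or.inl h
    · exact absurd ((hf : f.val.2 = b.val.1).symm.trans h) tbc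
    · exact Or.inr h
    · exact absurd ((hf : f.val.2 = b.val.1).symm.trans h) tbd
  have hNc : ∀ f : LineVertex A, LineAdj A f c → f = a ∨ f = b := by
    intro f hf
    rcases transfer heq.symm (f := f) (Or.inr (Or.inl hf)) with h | h | h | h
    · exact Or.inl h
    · exact absurd ((hf : f.val.2 = c.val.1).symm.trans h) (Ne.symm tac)
    · exact Or.inr h
    · exact absurd ((hf : f.val.2 = c.val.1).symm.trans h) (Ne.symm tbc)
  have hNd : ∀ f : LineVertex A, LineAdj A f d → f = a ∨ f = b := by
    intro f hf
    rcases transfer heq.symm (f := f) (Or.inr (Or.inr (Or.inr hf))) with h | h | h | h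
    · exact Or.inl h
    · exact absurd ((hf : f.val.2 = d.val.1).symm.trans h) (Ne.symm tad)
    · exact Or.inr h
    · exact absurd ((hf : f.val.2 = d.val.1).symm.trans h) (Ne.symm tbd)
  have hc' : c.val.2 = a.val.1 ∨ c.val.2 = b.val.1 := by
    rcases transfer heq.symm (f := c) (Or.inl rfl) with h | h | h | h
    · exact absurd h (Ne.symm hac)
    · exact Or.inl h
    · exact absurd h (Ne.symm hbc)
    · exact Or.inr h
  rcases hc' with hc2 | hc2
  · -- digon a c
    by_cases hd2 : d.val.2 = a.val.1
    · obtain ⟨fd, hfd⟩ := exists_into hloop hsc d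
      have hb2 : b.val.2 = d.val.1 := by
        rcases hNd fd hfd with h | h
        · exfalso
          rw [h] at hfd
          exact tcd (ha2.symm.trans hfd)
        · rw [h] at hfd; exact hfd
      have hNc1 : Nminus (LineAdj A) c = {a} :=
        nminus_eq_singleton (show LineAdj A a c from ha2) (fun f hf => by
          rcases hNc f hf with h | h
          · exact h
          · exfalso
            rw [h] at hf
            exact tcd (hb2.symm.trans hf).symm)
      exact digon_contra hdigon (show LineAdj A a c from ha2)
        (show LineAdj A c a from hc2) hNc1
    · have hNa1 : Nminus (LineAdj A) a = {c} :=
        nminus_eq_singleton (show LineAdj A c a from hc2) (fun f hf => by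
          rcases hNa f hf with h | h
          · exact h
          · exfalso
            rw [h] at hf
            exact hd2 hf)
      exact digon_contra hdigon (show LineAdj A c a from hc2)
        (show LineAdj A a c from ha2) hNa1
  · -- c.2 = b.1
    have hd' : d.val.2 = a.val.1 ∨ d.val.2 = b.val.1 := by
      rcases transfer heq.symm (f := d) (Or.inr (Or.inr (Or.inl rfl))) with h | h | h | h
      · exact absurd h (Ne.symm had)
      · exact Or.inl h
      · exact absurd h (Ne.symm hbd)
      · exact Or.inr h
    rcases hd' with hd2 | hd2
    · have hb' : b.val.2 = c.val.1 ∨ b.val.2 = d.val.1 := by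
        rcases transfer heq (f := b) (Or.inr (Or.inr (Or.inl rfl))) with h | h | h | h
        · exact absurd h hbc
        · exact Or.inl h
        · exact absurd h hbd
        · exact Or.inr h
      rcases hb' with hb2 | hb2
      · -- N⁻(d) would be empty
        obtain ⟨fd, hfd⟩ := exists_into hloop hsc d
        rcases hNd fd hfd with h | h
        · rw [h] at hfd
          exact tcd (ha2.symm.trans hfd)
        · rw [h] at hfd
          exact tcd (hb2.symm.trans hfd)
      · -- the 4-cycle a → c → b → d → a
        have hNa1 : Nminus (LineAdj A) a = {d} :=
          nminus_eq_singleton (show LineAdj A d a from hd2) (fun f hf => by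
            rcases hNa f hf with h | h
            · exfalso
              rw [h] at hf
              exact tab (hf.symm.trans hc2)
            · exact h)
        have hNc1 : Nminus (LineAdj A) c = {a} :=
          nminus_eq_singleton (show LineAdj A a c from ha2) (fun f hf => by
            rcases hNc f hf with h | h
            · exact h
            · exfalso
              rw [h] at hf
              exact tcd (hb2.symm.trans hf).symm)
        have hNb1 : Nminus (LineAdj A) b = {c} :=
          nminus_eq_singleton (show LineAdj A c b from hc2) (fun f hf => by
            rcases hNb f hf with h | h
            · exact h
            · exfalso
              rw [h] at hf
              exact tab (hd2.symm.trans hf)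
            )
        have hNd1 : Nminus (LineAdj A) d = {b} :=
          nminus_eq_singleton (show LineAdj A b d from hb2) (fun f hf => by
            rcases hNd f hf with h | h
            · exfalso
              rw [h] at hf
              exact tcd (ha2.symm.trans hf)
            · exact h)
        exact hnot4 (fourCycle hsc hab hac had hbc hbd hcd tab tac tad tbc tbd tcd
          ha2 hc2 hb2 hd2 hNa1 hNb1 hNc1 hNd1)
    · -- N⁻(a) would be empty
      obtain ⟨fa, hfa⟩ := exists_into hloop hsc a
      rcases hNa fa hfa with h | h
      · rw [h] at hfa
        exact tab (hc2.symm.trans hfa).symm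
      · rw [h] at hfa
        exact tab (hd2.symm.trans hfa).symm

lemma caseB0 (hloop : ∀ v : V, ¬ A v v) (hsc : StronglyConnected A)
    (hdigon : ∀ e : LineVertex A, (Nminus (LineAdj A) e).ncard = 1 →
      ¬ ∃ f : LineVertex A, LineAdj A e f ∧ LineAdj A f e)
    (hnot4 : ¬ ∃ φ : LineVertex A ≃ ZMod 4,
      ∀ e f : LineVertex A, LineAdj A e f ↔ φ f = φ e + 1)
    {a b c d : LineVertex A}
    (hab : a ≠ b) (hac : a ≠ c) (had : a ≠ d) (hbc : b ≠ c) (hbd : b ≠ d) (hcd : c ≠ d)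
    (tab : a.val.1 ≠ b.val.1) (tac : a.val.1 ≠ c.val.1) (tad : a.val.1 ≠ d.val.1)
    (tbc : b.val.1 ≠ c.val.1) (tbd : b.val.1 ≠ d.val.1) (tcd : c.val.1 ≠ d.val.1)
    (heq : NminusSet (LineAdj A) {a, b} = NminusSet (LineAdj A) {c, d}) : False := by
  have ha' : a.val.2 = c.val.1 ∨ a.val.2 = d.val.1 := by
    rcases transfer heq (f := a) (Or.inl rfl) with h | h | h | h
    · exact absurd h hac
    · exact Or.inl h
    · exact absurd h had
    · exact Or.inr h
  rcases ha' with h | h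
  · exact caseB0core hloop hsc hdigon hnot4 hab hac had hbc hbd hcd
      tab tac tad tbc tbd tcd h heq
  · exact caseB0core hloop hsc hdigon hnot4 hab had hac hbd hbc (Ne.symm hcd)
      tab tad tac tbd tbc (Ne.symm tcd) h (by rwa [Set.pair_comm c d] at heq)

lemma caseB (hloop : ∀ v : V, ¬ A v v) (hsc : StronglyConnected A)
    (hdigon : ∀ e : LineVertex A, (Nminus (LineAdj A) e).ncard = 1 →
      ¬ ∃ f : LineVertex A, LineAdj A e f ∧ LineAdj A f e)
    (hnot4 : ¬ ∃ φ : LineVertex A ≃ ZMod 4,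
      ∀ e f : LineVertex A, LineAdj A e f ↔ φ f = φ e + 1)
    (hII : ¬ ∃ x x' y y' : LineVertex A,
          x ≠ x' ∧ x ≠ y ∧ x ≠ y' ∧ x' ≠ y ∧ x' ≠ y' ∧ y ≠ y' ∧
          Nminus (LineAdj A) x = {y, y'} ∧ Nminus (LineAdj A) y' = {x'} ∧
          x ∈ Nminus (LineAdj A) x' ∩ Nminus (LineAdj A) y)
    (hIII : ¬ ∃ x x' y y' : LineVertex A,
          x ≠ x' ∧ x ≠ y ∧ x ≠ y' ∧ x' ≠ y ∧ x' ≠ y' ∧ y ≠ y' ∧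
          Nminus (LineAdj A) x = {y, y'} ∧ Nminus (LineAdj A) y = {x, x'} ∧
          (Nminus (LineAdj A) x' ∩ Nminus (LineAdj A) y').Nonempty)
    {a b c d : LineVertex A}
    (hab : a ≠ b) (hcd : c ≠ d) (hac : a ≠ c) (had : a ≠ d) (hbc : b ≠ c) (hbd : b ≠ d)
    (heq : NminusSet (LineAdj A) {a, b} = NminusSet (LineAdj A) {c, d}) : False := by
  classical
  by_cases htab : a.val.1 = b.val.1
  · by_cases htcd : c.val.1 = d.val.1
    · have ha2 : a.val.2 = c.val.1 := by
        rcases transfer heq (f := a) (Or.inl rfl) with h | h | h | h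
        · exact absurd h hac
        · exact h
        · exact absurd h had
        · exact (h : a.val.2 = d.val.1).trans htcd.symm
      have hb2 : b.val.2 = c.val.1 := by
        rcases transfer heq (f := b) (Or.inr (Or.inr (Or.inl rfl))) with h | h | h | h
        · exact absurd h hbc
        · exact h
        · exact absurd h hbd
        · exact (h : b.val.2 = d.val.1).trans htcd.symm
      exact hab (arc_ext htab (ha2.trans hb2.symm))
    · exact caseB2 hloop hdigon hab hac had hbc hbd htab htcd heq
  · by_cases htcd : c.val.1 = d.val.1
    · exact caseB2 hloop hdigon hcd (Ne.symm hac) (Ne.symm hbc) (Ne.symm had)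
        (Ne.symm hbd) htcd htab heq.symm
    · by_cases hca : c.val.1 = a.val.1
      · by_cases hdb : d.val.1 = b.val.1
        · exact caseB3core hloop hac had (Ne.symm hbc) hca hdb heq
        · by_cases hda : d.val.1 = a.val.1
          · exact htcd (hca.trans hda.symm)
          · exact caseB1 hloop hsc hdigon hII hIII hab hcd hac had hbc hbd hca
              (fun h => htab h.symm) hda hdb heq
      · by_cases hcb : c.val.1 = b.val.1
        · by_cases hda : d.val.1 = a.val.1
          · exact caseB3core hloop hbc hbd (Ne.symm hac) hcb hda
              (by rwa [Set.pair_comm a b] at heq)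
          · by_cases hdb : d.val.1 = b.val.1
            · exact htcd (hcb.trans hdb.symm)
            · exact caseB1 hloop hsc hdigon hII hIII (Ne.symm hab) hcd hbc hbd hac had
                hcb htab hdb hda (by rwa [Set.pair_comm a b] at heq)
        · by_cases hda : d.val.1 = a.val.1
          · exact caseB1 hloop hsc hdigon hII hIII hab (Ne.symm hcd) had hac hbd hbc
              hda (fun h => htab h.symm) hca hcb (by rwa [Set.pair_comm c d] at heq)
          · by_cases hdb : d.val.1 = b.val.1
            · exact caseB1 hloop hsc hdigon hII hIII (Ne.symm hab) (Ne.symm hcd) hbd hbc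
                had hac hdb htab hcb hca
                (by rw [Set.pair_comm a b, Set.pair_comm c d] at heq; exact heq)
            · exact caseB0 hloop hsc hdigon hnot4 hab hac had hbc hbd hcd htab
                (fun h => hca h.symm) (fun h => hda h.symm) (fun h => hcb h.symm)
                (fun h => hdb h.symm) htcd heq

end IdCodeAux

end AuxIdCode

/-- Characterization of line digraphs admitting a `(1,≤2)`-identifying code:
for a line digraph that is not a directed 4-cycle and whose vertices of in-degree 1
do not lie on digons, admitting a `(1,≤2)`-identifying code is equivalent to avoiding
the three forbidden configurations (i), (ii) and (iii). -/
theorem line_digraph_id_code_two_characterization {V : Type*} [Fintype V]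
    (A : V → V → Prop) (hloop : ∀ v : V, ¬ A v v) (hsc : StronglyConnected A)
    (hnot4 : ¬ ∃ φ : LineVertex A ≃ ZMod 4,
      ∀ e f : LineVertex A, LineAdj A e f ↔ φ f = φ e + 1)
    (hdigon : ∀ e : LineVertex A, (Nminus (LineAdj A) e).ncard = 1 →
      ¬ ∃ f : LineVertex A, LineAdj A e f ∧ LineAdj A f e) :
    AdmitsIdCode (LineAdj A) 2 ↔
      ((¬ ∃ x y z : LineVertex A, LineAdj A x y ∧ LineAdj A y z ∧ LineAdj A z x ∧
          (((Nminus (LineAdj A) x).ncard = 1 ∧ (Nminus (LineAdj A) y).ncard = 1) ∨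
           ((Nminus (LineAdj A) y).ncard = 1 ∧ (Nminus (LineAdj A) z).ncard = 1) ∨
           ((Nminus (LineAdj A) x).ncard = 1 ∧ (Nminus (LineAdj A) z).ncard = 1))) ∧
       (¬ ∃ x x' y y' : LineVertex A,
          x ≠ x' ∧ x ≠ y ∧ x ≠ y' ∧ x' ≠ y ∧ x' ≠ y' ∧ y ≠ y' ∧
          Nminus (LineAdj A) x = {y, y'} ∧ Nminus (LineAdj A) y' = {x'} ∧
          x ∈ Nminus (LineAdj A) x' ∩ Nminus (LineAdj A) y) ∧
       (¬ ∃ x x' y y' : LineVertex A,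
          x ≠ x' ∧ x ≠ y ∧ x ≠ y' ∧ x' ≠ y ∧ x' ≠ y' ∧ y ≠ y' ∧
          Nminus (LineAdj A) x = {y, y'} ∧ Nminus (LineAdj A) y = {x, x'} ∧
          (Nminus (LineAdj A) x' ∩ Nminus (LineAdj A) y').Nonempty)) := by
  classical
  constructor
  · intro hcode
    refine ⟨?_, ?_, ?_⟩
    · rintro ⟨x, y, z, hxy, hyz, hzx, (⟨h1, h2⟩ | ⟨h1, h2⟩ | ⟨h1, h2⟩)⟩
      · exact IdCodeAux.fwd_i hloop hcode hxy hyz hzx h1 h2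
      · exact IdCodeAux.fwd_i hloop hcode hyz hzx hxy h1 h2
      · exact IdCodeAux.fwd_i hloop hcode hzx hxy hyz h2 h1
    · rintro ⟨x, x', y, y', n1, n2, n3, n4, n5, n6, hNx, hNy', hmem⟩
      exact IdCodeAux.fwd_ii hcode n1 n2 n3 n4 n5 n6 hNx hNy' hmem.1 hmem.2
    · rintro ⟨x, x', y, y', n1, n2, n3, n4, n5, n6, hNx, hNy, w, hw1, hw2⟩
      exact IdCodeAux.fwd_iii hcode n1 n2 n3 n4 n5 n6 hNx hNy w hw1 hw2
  · rintro ⟨hI, hII, hIII⟩ X Y hXne hYne hX2 hY2 hne heq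
    exfalso
    have hXf : X.Finite := Set.toFinite X
    have hYf : Y.Finite := Set.toFinite Y
    have hX' : X.ncard = 1 ∨ X.ncard = 2 := by
      have := (Set.ncard_pos hXf).2 hXne
      omega
    have hY' : Y.ncard = 1 ∨ Y.ncard = 2 := by
      have := (Set.ncard_pos hYf).2 hYne
      omega
    rcases hX' with hX1 | hX1 <;> rcases hY' with hY1 | hY1
    · obtain ⟨x, rfl⟩ := Set.ncard_eq_one.mp hX1
      obtain ⟨y, rfl⟩ := Set.ncard_eq_one.mp hY1
      exact IdCodeAux.caseSingle hloop hsc hdigon (Set.mem_singleton y)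
        (fun h => hne (by rw [h])) heq
    · obtain ⟨x, rfl⟩ := Set.ncard_eq_one.mp hX1
      obtain ⟨z, w, hzw, rfl⟩ := Set.ncard_eq_two.mp hY1
      by_cases hzx : z = x
      · exact IdCodeAux.caseSingle hloop hsc hdigon
          (Set.mem_insert_of_mem z (Set.mem_singleton w))
          (fun h => hzw (hzx.trans h.symm)) heq
      · exact IdCodeAux.caseSingle hloop hsc hdigon (Set.mem_insert z {w}) hzx heq
    · obtain ⟨z, w, hzw, rfl⟩ := Set.ncard_eq_two.mp hX1
      obtain ⟨x, rfl⟩ := Set.ncard_eq_one.mp hY1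
      by_cases hzx : z = x
      · exact IdCodeAux.caseSingle hloop hsc hdigon
          (Set.mem_insert_of_mem z (Set.mem_singleton w))
          (fun h => hzw (hzx.trans h.symm)) heq.symm
      · exact IdCodeAux.caseSingle hloop hsc hdigon (Set.mem_insert z {w}) hzx heq.symm
    · obtain ⟨x, y, hxy, rfl⟩ := Set.ncard_eq_two.mp hX1
      obtain ⟨z, w, hzw, rfl⟩ := Set.ncard_eq_two.mp hY1
      by_cases e1 : x = z
      · subst e1
        exact IdCodeAux.caseA hloop hsc hdigon hI (Ne.symm hxy) (Ne.symm hzw)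
          (fun h => hne (by rw [h])) heq
      · by_cases e2 : x = w
        · subst e2
          exact IdCodeAux.caseA hloop hsc hdigon hI (Ne.symm hxy) hzw
            (fun h => hne (by rw [h]; exact Set.pair_comm x z))
            (by rwa [Set.pair_comm z x] at heq)
        · by_cases e3 : y = z
          · subst e3
            exact IdCodeAux.caseA hloop hsc hdigon hI hxy (Ne.symm hzw) e2
              (by rwa [Set.pair_comm x y] at heq)
          · by_cases e4 : y = w
            · subst e4
              exact IdCodeAux.caseA hloop hsc hdigon hI hxy hzw e1
                (by rw [Set.pair_comm x y, Set.pair_comm z y] at heq; exact heq)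
            · exact IdCodeAux.caseB hloop hsc hdigon hnot4 hII hIII hxy hzw e1 e2 e3 e4 heq
end

section
/- Let D be a strongly connected digraph without loops, with V(D) finite and minimum in-degree δ^-(D) ≥ 2. Then the second iterated line digraph L(L(D)) admits a (1,≤2)-identifying code. -/
namespace IdProofAux

variable {V : Type*}

/-- Build a vertex of the second line digraph from a path `a → b → c`. -/
def mk3 {A : V → V → Prop} (a b c : V) (hab : A a b) (hbc : A b c) :
    LineVertex (LineAdj A) :=
  ⟨(⟨(a, b), hab⟩, ⟨(b, c), hbc⟩), rfl⟩

lemma mk3_inj {A : V → V → Prop} {a b c a' b' c' : V} {h1 h2 h1' h2'} :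
    (mk3 a b c h1 h2 : LineVertex (LineAdj A)) = mk3 a' b' c' h1' h2' ↔
      a = a' ∧ b = b' ∧ c = c' := by
  constructor
  · intro h
    have h' := congrArg Subtype.val h
    simp only [mk3, Prod.ext_iff, Subtype.ext_iff, Prod.mk.injEq] at h'
    tauto
  · rintro ⟨rfl, rfl, rfl⟩; rfl

lemma repr3 {A : V → V → Prop} (p : LineVertex (LineAdj A)) :
    ∃ a b c hab hbc, p = mk3 a b c hab hbc := by
  obtain ⟨⟨⟨⟨a, b⟩, hab⟩, ⟨⟨b', c⟩, hbc⟩⟩, hp⟩ := p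
  have hbb : b = b' := hp
  subst hbb
  exact ⟨a, b, c, hab, hbc, rfl⟩

lemma adj3 {A : V → V → Prop} {a b c a' b' c' : V} {h1 h2 h1' h2'} :
    LineAdj (LineAdj A) (mk3 a b c h1 h2) (mk3 a' b' c' h1' h2') ↔ b = a' ∧ c = b' := by
  show (⟨(b, c), h2⟩ : LineVertex A) = ⟨(a', b'), h1'⟩ ↔ _
  simp [Subtype.ext_iff, Prod.ext_iff]

lemma memN {W : Type*} {R : W → W → Prop} {S : Set W} {w : W} :
    w ∈ NminusSet R S ↔ ∃ y ∈ S, w = y ∨ R w y := by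
  simp [NminusSet, NminusClosed, Nminus]

lemma two_in [Fintype V] {A : V → V → Prop} (hdeg : ∀ v, 2 ≤ (Nminus A v).ncard) (v : V) :
    ∃ s₁ s₂, s₁ ≠ s₂ ∧ A s₁ v ∧ A s₂ v := by
  have h := hdeg v
  obtain ⟨s₁, s₂, hs₁, hs₂, hne⟩ :=
    (Set.one_lt_ncard_iff (s := Nminus A v) (Set.toFinite _)).1 (by omega)
  exact ⟨s₁, s₂, hne, hs₁, hs₂⟩

lemma small {W : Type*} [Finite W] {X : Set W} (hne : X.Nonempty) (h2 : X.ncard ≤ 2) :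
    (∃ p, X = {p}) ∨ ∃ p q, p ≠ q ∧ X = {p, q} := by
  obtain ⟨p, hp⟩ := hne
  by_cases hsub : X ⊆ {p}
  · exact Or.inl ⟨p, subset_antisymm hsub (by simpa using hp)⟩
  · obtain ⟨x, hx, hxp⟩ := Set.not_subset.1 hsub
    have hxp' : x ≠ p := by simpa using hxp
    right
    refine ⟨p, x, hxp'.symm, (Set.eq_of_subset_of_ncard_le (Set.pair_subset hp hx) ?_
      (Set.toFinite X)).symm⟩
    rw [Set.ncard_pair hxp'.symm]
    exact h2

lemma caseII_final [Fintype V] {A : V → V → Prop} (hloop : ∀ v, ¬A v v)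
    (hdeg : ∀ v, 2 ≤ (Nminus A v).ncard)
    {X Y : Set (LineVertex (LineAdj A))}
    (hmem : ∀ w, (∃ y ∈ X, w = y ∨ LineAdj (LineAdj A) w y) ↔
      (∃ y ∈ Y, w = y ∨ LineAdj (LineAdj A) w y))
    (b u w : V) (hub : A u b) (hwb : A w b) (hbu : A b u) (huw : u ≠ w)
    (q₂ : LineVertex (LineAdj A))
    (hX : X = {mk3 u b u hub hbu, mk3 w b u hwb hbu})
    (hY : Y = {mk3 b u b hbu hub, q₂}) : False := by
  obtain ⟨α, β, γ, k1, k2, rfl⟩ := repr3 q₂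
  have hub' : u ≠ b := fun h => hloop b (h ▸ hub)
  have hwb' : w ≠ b := fun h => hloop b (h ▸ hwb)
  -- the in-neighbours of (w,b,u) must be dominated by Y
  obtain ⟨r₁, r₂, hr, hr₁, hr₂⟩ := two_in hdeg w
  have opt : ∀ (r : V) (hrw : A r w),
      mk3 r w b hrw hwb = mk3 α β γ k1 k2 ∨
        LineAdj (LineAdj A) (mk3 r w b hrw hwb) (mk3 α β γ k1 k2) := by
    intro r hrw
    obtain ⟨y', hy', hc⟩ := (hmem (mk3 r w b hrw hwb)).1
      ⟨_, (by rw [hX]; exact Set.mem_insert_of_mem _ rfl), Or.inr (adj3.2 ⟨rfl, rfl⟩)⟩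
    rw [hY] at hy'
    simp only [Set.mem_insert_iff, Set.mem_singleton_iff] at hy'
    rcases hy' with rfl | rfl
    · rcases hc with h | h
      · exact absurd (mk3_inj.1 h).2.1 (fun hh => huw hh.symm)
      · rw [adj3] at h; exact absurd h.1 hwb'
    · exact hc
  have hq2shape : w = α ∧ b = β := by
    rcases opt r₁ hr₁ with h1 | h1
    · rcases opt r₂ hr₂ with h2 | h2
      · exact absurd (mk3_inj.1 (h1.trans h2.symm)).1 hr
      · exact adj3.1 h2
    · exact adj3.1 h1
  obtain ⟨rfl, rfl⟩ := hq2shape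
  -- the in-neighbours of (u,b,u) must be dominated by Y, forcing them all equal to q
  obtain ⟨r₁', r₂', hr', hr₁', hr₂'⟩ := two_in hdeg u
  have opt' : ∀ (r : V) (hru : A r u), r = b := by
    intro r hru
    obtain ⟨y', hy', hc⟩ := (hmem (mk3 r u b hru hub)).1
      ⟨_, (by rw [hX]; exact Set.mem_insert _ _), Or.inr (adj3.2 ⟨rfl, rfl⟩)⟩
    rw [hY] at hy'
    simp only [Set.mem_insert_iff, Set.mem_singleton_iff] at hy'
    rcases hy' with rfl | rfl
    · rcases hc with h | h
      · exact (mk3_inj.1 h).1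
      · rw [adj3] at h; exact absurd h.1 hub'
    · rcases hc with h | h
      · exact absurd (mk3_inj.1 h).2.1 hub'
      · rw [adj3] at h; exact absurd h.1 huw
  exact hr' ((opt' r₁' hr₁').trans (opt' r₂' hr₂').symm)

lemma main [Fintype V] {A : V → V → Prop} (hloop : ∀ v, ¬A v v)
    (hdeg : ∀ v, 2 ≤ (Nminus A v).ncard)
    {X Y : Set (LineVertex (LineAdj A))}
    (hXc : X.ncard ≤ 2) (hYc : Y.ncard ≤ 2)
    (heq : NminusSet (LineAdj (LineAdj A)) X = NminusSet (LineAdj (LineAdj A)) Y)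
    {p : LineVertex (LineAdj A)} (hpX : p ∈ X) (hpY : p ∉ Y) : False := by
  have hmem : ∀ w, (∃ y ∈ X, w = y ∨ LineAdj (LineAdj A) w y) ↔
      (∃ y ∈ Y, w = y ∨ LineAdj (LineAdj A) w y) := fun w => by
    rw [← memN, ← memN, heq]
  obtain ⟨a, b, c, hab, hbc, rfl⟩ := repr3 p
  have hab' : a ≠ b := fun h => hloop b (h ▸ hab)
  have hbc' : b ≠ c := fun h => hloop c (h ▸ hbc)
  -- Step 1: p is dominated by some q ∈ Y, necessarily of shape (b,c,d)
  obtain ⟨q, hqY, hq⟩ := (hmem _).1 ⟨_, hpX, Or.inl rfl⟩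
  obtain ⟨b₀, c₀, d, hq1, hq2, rfl⟩ := repr3 q
  rcases hq with hq | hq
  · exact hpY (hq ▸ hqY)
  rw [adj3] at hq
  obtain ⟨rfl, rfl⟩ := hq
  -- structure of Y
  rcases small ⟨_, hqY⟩ hYc with ⟨y, hY⟩ | ⟨y₁, y₂, hy12, hY⟩
  · -- Y is a singleton, so Y = {q}; then the in-neighbours of p can't all be dominated
    have hqy : mk3 b c d hq1 hq2 = y := by rw [hY] at hqY; exact hqY
    subst hqy
    obtain ⟨s₁, s₂, hs, hs₁, hs₂⟩ := two_in hdeg a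
    have key : ∀ (s : V) (hsa : A s a), mk3 s a b hsa hab = mk3 b c d hq1 hq2 := by
      intro s hsa
      obtain ⟨y', hy', hcs⟩ := (hmem (mk3 s a b hsa hab)).1
        ⟨_, hpX, Or.inr (adj3.2 ⟨rfl, rfl⟩)⟩
      rw [hY, Set.mem_singleton_iff] at hy'
      subst hy'
      rcases hcs with h | h
      · exact h
      · rw [adj3] at h; exact absurd h.1 hab'
    exact hs (mk3_inj.1 ((key s₁ hs₁).trans (key s₂ hs₂).symm)).1
  -- Y = {q, q₂}
  have hqmem : mk3 b c d hq1 hq2 = y₁ ∨ mk3 b c d hq1 hq2 = y₂ := by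
    rw [hY] at hqY; simpa using hqY
  obtain ⟨q₂, hYpair⟩ : ∃ q₂, Y = {mk3 b c d hq1 hq2, q₂} := by
    rcases hqmem with h | h
    · exact ⟨y₂, by rw [hY, ← h]⟩
    · exact ⟨y₁, by rw [hY, ← h, Set.pair_comm]⟩
  have hq2Y : q₂ ∈ Y := by rw [hYpair]; exact Set.mem_insert_of_mem _ rfl
  have hqY' : mk3 b c d hq1 hq2 ∈ Y := by rw [hYpair]; exact Set.mem_insert _ _
  by_cases hcase : ∃ x ∈ X, ∃ (d' : V) (k1 : A b c) (k2 : A c d'), x = mk3 b c d' k1 k2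
  · -- CASE I: X contains a vertex x = (b,c,d')
    obtain ⟨x, hxX, d', k1, k2, rfl⟩ := hcase
    have hpx : mk3 a b c hab hbc ≠ mk3 b c d' k1 k2 := fun h => hab' (mk3_inj.1 h).1
    have hXpair : X = {mk3 a b c hab hbc, mk3 b c d' k1 k2} :=
      (Set.eq_of_subset_of_ncard_le (Set.pair_subset hpX hxX)
        (by rw [Set.ncard_pair hpx]; exact hXc) (Set.toFinite X)).symm
    obtain ⟨s₁, s₂, hs, hs₁, hs₂⟩ := two_in hdeg a
    -- a vertex z with an arc into q₂ forces the shape of q₂, yielding a contradiction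
    have subi : ∀ (s : V) (hsa : A s a),
        LineAdj (LineAdj A) (mk3 s a b hsa hab) q₂ → False := by
      intro s hsa hR
      obtain ⟨u, v, d₂, k1', k2', rfl⟩ := repr3 q₂
      rw [adj3] at hR
      obtain ⟨rfl, rfl⟩ := hR
      have hd2c : d₂ ≠ c := by
        intro h; subst h
        have he : (mk3 a b d₂ k1' k2' : LineVertex (LineAdj A)) = mk3 a b d₂ hab hbc :=
          mk3_inj.2 ⟨rfl, rfl, rfl⟩
        rw [he] at hq2Y
        exact hpY hq2Y
      obtain ⟨x', hx', hcs⟩ := (hmem _).2 ⟨_, hq2Y, Or.inl rfl⟩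
      rw [hXpair] at hx'
      simp only [Set.mem_insert_iff, Set.mem_singleton_iff] at hx'
      rcases hx' with rfl | rfl
      · rcases hcs with h | h
        · exact hd2c (mk3_inj.1 h).2.2
        · rw [adj3] at h; exact hab' h.1.symm
      · rcases hcs with h | h
        · exact hab' (mk3_inj.1 h).1
        · rw [adj3] at h; exact hd2c h.2
    -- when one in-neighbour of p equals q and another equals q₂
    have subii : ∀ (s s' : V) (hsa : A s a) (hs'a : A s' a), s ≠ s' →
        mk3 s a b hsa hab = mk3 b c d hq1 hq2 → mk3 s' a b hs'a hab = q₂ → False := by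
      intro s s' hsa hs'a hss' h1 h2
      obtain ⟨e1, e2, e3⟩ := mk3_inj.1 h1
      -- e1 : s = b, e2 : a = c, e3 : b = d
      have hs'b : s' ≠ b := fun h => hss' (e1.trans h.symm)
      have hs'a' : s' ≠ a := fun h => hloop a (h ▸ hs'a)
      obtain ⟨r, _, _, hrs', _⟩ := two_in hdeg s'
      obtain ⟨y', hy', hcs⟩ := (hmem (mk3 r s' a hrs' hs'a)).2
        ⟨_, hq2Y, Or.inr (by rw [← h2]; exact adj3.2 ⟨rfl, rfl⟩)⟩
      rw [hXpair] at hy'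
      simp only [Set.mem_insert_iff, Set.mem_singleton_iff] at hy'
      rcases hy' with rfl | rfl
      · rcases hcs with h | h
        · exact hs'b (mk3_inj.1 h).2.1
        · rw [adj3] at h; exact hs'a' h.1
      · rcases hcs with h | h
        · exact hs'a' ((mk3_inj.1 h).2.1.trans e2.symm)
        · rw [adj3] at h; exact hs'b h.1
    have opt : ∀ (s : V) (hsa : A s a),
        mk3 s a b hsa hab = mk3 b c d hq1 hq2 ∨ mk3 s a b hsa hab = q₂ ∨
          LineAdj (LineAdj A) (mk3 s a b hsa hab) q₂ := by
      intro s hsa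
      obtain ⟨y', hy', hcs⟩ := (hmem (mk3 s a b hsa hab)).1
        ⟨_, hpX, Or.inr (adj3.2 ⟨rfl, rfl⟩)⟩
      rw [hYpair] at hy'
      simp only [Set.mem_insert_iff, Set.mem_singleton_iff] at hy'
      rcases hy' with rfl | rfl
      · rcases hcs with h | h
        · exact Or.inl h
        · rw [adj3] at h; exact absurd h.1 hab'
      · exact Or.inr hcs
    rcases opt s₁ hs₁ with h1 | h1 | h1
    · rcases opt s₂ hs₂ with h2 | h2 | h2
      · exact hs (mk3_inj.1 (h1.trans h2.symm)).1
      · exact subii s₁ s₂ hs₁ hs₂ hs h1 h2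
      · exact subi s₂ hs₂ h2
    · rcases opt s₂ hs₂ with h2 | h2 | h2
      · exact subii s₂ s₁ hs₂ hs₁ hs.symm h2 h1
      · exact hs (mk3_inj.1 (h1.trans h2.symm)).1
      · exact subi s₂ hs₂ h2
    · exact subi s₁ hs₁ h1
  · -- CASE II: no vertex of X has shape (b,c,·); then N⁻(q) ⊆ X
    push_neg at hcase
    obtain ⟨s₁, s₂, hs, hs₁, hs₂⟩ := two_in hdeg b
    have hzX : ∀ (s : V) (hsb : A s b), mk3 s b c hsb hbc ∈ X := by
      intro s hsb
      obtain ⟨x', hx', hcs⟩ := (hmem _).2 ⟨_, hqY', Or.inr (adj3.2 ⟨rfl, rfl⟩)⟩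
      rcases hcs with rfl | h
      · exact hx'
      · exfalso
        obtain ⟨u, v, w', l1, l2, rfl⟩ := repr3 x'
        rw [adj3] at h
        obtain ⟨rfl, rfl⟩ := h
        exact hcase _ hx' w' l1 l2 rfl
    have hzz : (mk3 s₁ b c hs₁ hbc : LineVertex (LineAdj A)) ≠ mk3 s₂ b c hs₂ hbc :=
      fun h => hs (mk3_inj.1 h).1
    have hXpair : X = {mk3 s₁ b c hs₁ hbc, mk3 s₂ b c hs₂ hbc} :=
      (Set.eq_of_subset_of_ncard_le (Set.pair_subset (hzX s₁ hs₁) (hzX s₂ hs₂))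
        (by rw [Set.ncard_pair hzz]; exact hXc) (Set.toFinite X)).symm
    have key : ∀ (s' : V) (hs' : A s' b), s' ≠ a →
        X = {mk3 a b c hab hbc, mk3 s' b c hs' hbc} → False := by
      intro s' hs' hs'a hX'
      obtain ⟨x', hx', hcs⟩ := (hmem _).2 ⟨_, hqY', Or.inl rfl⟩
      rw [hX'] at hx'
      simp only [Set.mem_insert_iff, Set.mem_singleton_iff] at hx'
      rcases hx' with rfl | rfl
      · rcases hcs with h | h
        · exact hpY (h ▸ hqY)
        · rw [adj3] at h
          obtain ⟨e1, e2⟩ := h  -- c = a, d = b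
          subst c; subst d
          exact caseII_final hloop hdeg hmem b a s' hab hs' hbc
            (fun h => hs'a h.symm) q₂ hX' hYpair
      · rcases hcs with h | h
        · exact hbc' (mk3_inj.1 h).2.1.symm
        · rw [adj3] at h
          obtain ⟨e1, e2⟩ := h  -- c = s', d = b
          subst c; subst d
          exact caseII_final hloop hdeg hmem b s' a hs' hab hbc
            hs'a q₂ (by rw [hX']; exact Set.pair_comm _ _) hYpair
    have hpmem : mk3 a b c hab hbc = mk3 s₁ b c hs₁ hbc ∨
        mk3 a b c hab hbc = mk3 s₂ b c hs₂ hbc := by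
      rw [hXpair] at hpX; simpa using hpX
    rcases hpmem with h | h
    · obtain ⟨e1, -, -⟩ := mk3_inj.1 h  -- a = s₁
      refine key s₂ hs₂ (fun hh => hs (e1.symm.trans hh.symm)) ?_
      rw [hXpair, h]
    · obtain ⟨e1, -, -⟩ := mk3_inj.1 h  -- a = s₂
      refine key s₁ hs₁ (fun hh => hs (hh.trans e1)) ?_
      rw [hXpair, h, Set.pair_comm]

end IdProofAux


/-- The second iterated line digraph of a strongly connected loopless digraph of minimum
in-degree at least 2 admits a `(1,≤2)`-identifying code. -/
theorem second_line_digraph_admits_id_code_two {V : Type*} [Fintype V]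
    (A : V → V → Prop) (hloop : ∀ v : V, ¬ A v v) (hsc : StronglyConnected A)
    (hdeg : ∀ v : V, 2 ≤ (Nminus A v).ncard) :
    AdmitsIdCode (LineAdj (LineAdj A)) 2 := by
  intro X Y hXne hYne hXc hYc hne heq
  by_cases hsub : X ⊆ Y
  · obtain ⟨p, hpY, hpX⟩ : ∃ p, p ∈ Y ∧ p ∉ X := by
      by_contra h
      push_neg at h
      exact hne (subset_antisymm hsub h)
    exact IdProofAux.main hloop hdeg hYc hXc heq.symm hpY hpX
  · obtain ⟨p, hpX, hpY⟩ := Set.not_subset.1 hsub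
    exact IdProofAux.main hloop hdeg hXc hYc heq hpX hpY
end

section
/- Let D be a strongly connected digraph without loops, with V(D) finite and minimum in-degree δ^-(D) ≥ 3. Then the line digraph LD of D admits a (1,≤2)-identifying code. -/
section Aux

variable {V : Type*} [Fintype V] {A : V → V → Prop}

lemma mem_NminusSet_line {S : Set (LineVertex A)} {e : LineVertex A} :
    e ∈ NminusSet (LineAdj A) S ↔ ∃ v ∈ S, e = v ∨ e.val.2 = v.val.1 := by
  simp [NminusSet, NminusClosed, Nminus, LineAdj]

lemma three_arcs (hdeg : ∀ v : V, 3 ≤ (Nminus A v).ncard) (t : V) :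
    ∃ a b c : LineVertex A, a ≠ b ∧ a ≠ c ∧ b ≠ c ∧
      a.val.2 = t ∧ b.val.2 = t ∧ c.val.2 = t := by
  obtain ⟨a, ha, b, hb, c, hc, hab, hac, hbc⟩ :=
    (Set.two_lt_ncard (s := Nminus A t) (Set.toFinite _)).mp (by have := hdeg t; omega)
  refine ⟨⟨(a, t), ha⟩, ⟨(b, t), hb⟩, ⟨(c, t), hc⟩, ?_, ?_, ?_, rfl, rfl, rfl⟩ <;>
    simp [Subtype.ext_iff, Prod.ext_iff, hab, hac, hbc]

lemma tail_transfer (hdeg : ∀ v : V, 3 ≤ (Nminus A v).ncard)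
    {X Y : Set (LineVertex A)}
    (heq : NminusSet (LineAdj A) X = NminusSet (LineAdj A) Y)
    (hY2 : Y.ncard ≤ 2) {f : LineVertex A} (hf : f ∈ X) :
    ∃ g ∈ Y, g.val.1 = f.val.1 := by
  by_contra hcon
  push_neg at hcon
  obtain ⟨a, b, c, hab, hac, hbc, ha, hb, hc⟩ := three_arcs hdeg f.val.1
  have key : ∀ e : LineVertex A, e.val.2 = f.val.1 → e ∈ Y := by
    intro e he
    have hmem : e ∈ NminusSet (LineAdj A) X :=
      mem_NminusSet_line.mpr ⟨f, hf, Or.inr he⟩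
    rw [heq] at hmem
    obtain ⟨g, hg, h | h⟩ := mem_NminusSet_line.mp hmem
    · exact h ▸ hg
    · exact absurd (h ▸ he : g.val.1 = f.val.1) (hcon g hg)
  have : 2 < Y.ncard := (Set.two_lt_ncard (Set.toFinite _)).mpr
    ⟨a, key a ha, b, key b hb, c, key c hc, hab, hac, hbc⟩
  omega

lemma pair_eq {W : Type*} [Finite W] {X : Set W} (h2 : X.ncard ≤ 2) {f g : W}
    (hf : f ∈ X) (hg : g ∈ X) (hfg : f ≠ g) : ∀ x ∈ X, x = f ∨ x = g := by
  intro x hx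
  by_contra hcon
  push_neg at hcon
  have : 2 < X.ncard := (Set.two_lt_ncard (Set.toFinite _)).mpr
    ⟨x, hx, f, hf, g, hg, hcon.1, hcon.2, hfg⟩
  omega

lemma key_contra (hloop : ∀ v : V, ¬ A v v) (hdeg : ∀ v : V, 3 ≤ (Nminus A v).ncard)
    {X Y : Set (LineVertex A)} (hX2 : X.ncard ≤ 2) (hY2 : Y.ncard ≤ 2)
    (heq : NminusSet (LineAdj A) X = NminusSet (LineAdj A) Y)
    {f : LineVertex A} (hfX : f ∈ X) (hfY : f ∉ Y) : False := by
  have noloop : ∀ e : LineVertex A, e.val.1 ≠ e.val.2 := fun e h =>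
    hloop e.val.1 (by have := e.prop; rwa [← h] at this)
  -- f ∈ N[Y], f ∉ Y, so there is h ∈ Y with f.2 = h.1
  have hfN : f ∈ NminusSet (LineAdj A) Y :=
    heq ▸ mem_NminusSet_line.mpr ⟨f, hfX, Or.inl rfl⟩
  obtain ⟨h, hhY, hcase⟩ := mem_NminusSet_line.mp hfN
  have hfh : f.val.2 = h.val.1 := by
    rcases hcase with rfl | h2
    · exact absurd hhY hfY
    · exact h2
  -- transfer h's tail back to X: g ∈ X with g.1 = f.2
  obtain ⟨g, hgX, hg1⟩ := tail_transfer hdeg heq.symm hX2 hhY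
  have hg : g.val.1 = f.val.2 := hg1.trans hfh.symm
  have hgf : g ≠ f := by
    intro e; rw [e] at hg; exact noloop f hg
  -- y ∈ Y with y.1 = f.1
  obtain ⟨y, hyY, hy1⟩ := tail_transfer hdeg heq hY2 hfX
  -- y ∈ N[X]
  have hyN : y ∈ NminusSet (LineAdj A) X :=
    heq ▸ mem_NminusSet_line.mpr ⟨y, hyY, Or.inl rfl⟩
  obtain ⟨x, hxX, hxc⟩ := mem_NminusSet_line.mp hyN
  rcases hxc with rfl | hy2
  · -- y ∈ X, so y = f or y = g
    rcases pair_eq hX2 hfX hgX (Ne.symm hgf) y hxX with hyf | hyg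
    · exact hfY (hyf ▸ hyY)
    · -- y.1 = f.1 and y.1 = g.1 = f.2 : contradiction f.1 = f.2
      exact noloop f (hy1.symm.trans ((congrArg (fun z => z.val.1) hyg).trans hg))
  · -- y.2 = x.1 with x = f or x = g
    rcases pair_eq hX2 hfX hgX (Ne.symm hgf) x hxX with hxf | hxg
    · rw [hxf] at hy2
      exact noloop y (hy1.trans hy2.symm)
    · -- y.2 = x.1 = f.2 and y.1 = f.1, so y = f ∈ Y, contradiction
      rw [hxg] at hy2
      have : y = f := Subtype.ext (Prod.ext hy1 (hy2.trans hg))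
      exact hfY (this ▸ hyY)

end Aux

/-- The line digraph of a strongly connected loopless digraph of minimum in-degree at
least 3 admits a `(1,≤2)`-identifying code. -/
theorem line_digraph_admits_id_code_two {V : Type*} [Fintype V]
    (A : V → V → Prop) (hloop : ∀ v : V, ¬ A v v) (hsc : StronglyConnected A)
    (hdeg : ∀ v : V, 3 ≤ (Nminus A v).ncard) :
    AdmitsIdCode (LineAdj A) 2 := by
  intro X Y hXne hYne hX2 hY2 hne heq
  have : ¬ X ⊆ Y ∨ ¬ Y ⊆ X := by
    by_contra hc
    push_neg at hc
    exact hne (subset_antisymm hc.1 hc.2)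
  rcases this with hns | hns <;> obtain ⟨f, hf1, hf2⟩ := Set.not_subset.mp hns
  · exact key_contra hloop hdeg hX2 hY2 heq hf1 hf2
  · exact key_contra hloop hdeg hY2 hX2 heq.symm hf1 hf2
end

section
/- Let D be a strongly connected 2-in-regular digraph without loops, with V(D) finite, and let LD be its line digraph. Then LD admits a (1,≤2)-identifying code if and only if there do not exist four distinct vertices x, x', y, y' of LD such that N^-(x) = {y, y'}, N^-(y) = {x, x'}, and N^-(x') ∩ N^-(y') ≠ ∅. -/
set_option linter.unusedVariables false
set_option linter.unusedSectionVars false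

section IdAux

variable {W : Type*} {R : W → W → Prop}

lemma mem_nclosed {a v : W} : a ∈ NminusClosed R v ↔ a = v ∨ a ∈ Nminus R v :=
  Set.mem_insert_iff

lemma nset_singleton (R : W → W → Prop) (a : W) : NminusSet R {a} = NminusClosed R a := by
  simp [NminusSet]

lemma nset_pair (R : W → W → Prop) (u v : W) :
    NminusSet R {u, v} = NminusClosed R u ∪ NminusClosed R v := by
  simp [NminusSet]

lemma mem_nset_pair {a u v : W} :
    a ∈ NminusSet R {u, v} ↔ (a = u ∨ a ∈ Nminus R u) ∨ (a = v ∨ a ∈ Nminus R v) := by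
  rw [nset_pair]
  simp only [Set.mem_union, NminusClosed, Set.mem_insert_iff]

lemma pair_cases {t a b : W} (h : t ∈ ({a, b} : Set W)) : t = a ∨ t = b := h

lemma pair_eq_first {a b c d : W} (h : ({a, b} : Set W) = {c, d}) : a = c ∨ a = d :=
  pair_cases (by rw [← h]; exact Set.mem_insert _ _)

lemma two_elems (hC : ∀ v : W, (Nminus R v).ncard = 2) (v : W) :
    ∃ p q : W, p ≠ q ∧ Nminus R v = {p, q} :=
  Set.ncard_eq_two.mp (hC v)

lemma n_nonempty (hC : ∀ v : W, (Nminus R v).ncard = 2) (v : W) : (Nminus R v).Nonempty := by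
  obtain ⟨p, q, _, hs⟩ := two_elems hC v
  exact ⟨p, by rw [hs]; exact Set.mem_insert _ _⟩

lemma other_elem (hC : ∀ v : W, (Nminus R v).ncard = 2) {a v : W} (ha : a ∈ Nminus R v) :
    ∃ b, b ≠ a ∧ Nminus R v = {a, b} := by
  obtain ⟨p, q, hpq, hs⟩ := two_elems hC v
  rw [hs] at ha
  rcases pair_cases ha with rfl | rfl
  · exact ⟨q, hpq.symm, hs⟩
  · exact ⟨p, hpq, by rw [Set.pair_comm] at hs; exact hs⟩

lemma eq_pair_of_mem (hC : ∀ v : W, (Nminus R v).ncard = 2) {a b v : W}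
    (ha : a ∈ Nminus R v) (hb : b ∈ Nminus R v) (hab : a ≠ b) :
    Nminus R v = {a, b} := by
  have hsub : ({a, b} : Set W) ⊆ Nminus R v := by
    rintro t ht
    rcases pair_cases ht with rfl | rfl
    · exact ha
    · exact hb
  have hfin : (Nminus R v).Finite := by
    obtain ⟨p, q, _, hs⟩ := two_elems hC v
    rw [hs]; exact (Set.finite_singleton q).insert p
  exact (Set.eq_of_subset_of_ncard_le hsub (by rw [hC v, Set.ncard_pair hab]) hfin).symm

section Core

variable (hC : ∀ v : W, (Nminus R v).ncard = 2)
variable (hD : ∀ ⦃u v w : W⦄, w ∈ Nminus R u → w ∈ Nminus R v → Nminus R u = Nminus R v)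
variable (hI : ∀ v : W, v ∉ Nminus R v)
variable (hE : ∀ ⦃a b w : W⦄, a ∈ Nminus R w → b ∈ Nminus R w → Nminus R a = Nminus R b → a = b)
include hC hD hI

/-- Case |X| = |Y| = 1. -/
lemma case11 {x y : W} (hxy : x ≠ y) (h : NminusClosed R x = NminusClosed R y) : False := by
  have hx : x ∈ Nminus R y := by
    have hx' : x ∈ NminusClosed R y := by rw [← h]; exact Set.mem_insert _ _
    rcases mem_nclosed.mp hx' with h1 | h1
    · exact absurd h1 hxy
    · exact h1
  have key : ∀ t, t ∈ Nminus R x → t = y := by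
    intro t ht
    have ht' : t ∈ NminusClosed R y := by rw [← h]; exact mem_nclosed.mpr (Or.inr ht)
    rcases mem_nclosed.mp ht' with h1 | h1
    · exact h1
    · have heq := hD ht h1
      rw [← heq] at hx
      exact absurd hx (hI x)
  obtain ⟨p, q, hpq, hs⟩ := two_elems hC x
  have hp : p = y := key p (by rw [hs]; exact Set.mem_insert _ _)
  have hq : q = y := key q (by rw [hs]; exact Set.mem_insert_of_mem _ rfl)
  exact hpq (hp.trans hq.symm)

/-- Case X = {x}, Y = {x, y₂}. -/
lemma case12core {x y2 : W} (hyx : y2 ≠ x)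
    (h : NminusClosed R x = NminusSet R {x, y2}) : False := by
  have hy2 : y2 ∈ Nminus R x := by
    have : y2 ∈ NminusClosed R x := by
      rw [h]; exact mem_nset_pair.mpr (Or.inr (Or.inl rfl))
    rcases mem_nclosed.mp this with h1 | h1
    · exact absurd h1 hyx
    · exact h1
  have key : ∀ t, t ∈ Nminus R y2 → t = x := by
    intro t ht
    have ht' : t ∈ NminusClosed R x := by
      rw [h]; exact mem_nset_pair.mpr (Or.inr (Or.inr ht))
    rcases mem_nclosed.mp ht' with h1 | h1
    · exact h1
    · have heq := hD ht h1
      rw [← heq] at hy2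
      exact absurd hy2 (hI y2)
  obtain ⟨p, q, hpq, hs⟩ := two_elems hC y2
  have hp : p = x := key p (by rw [hs]; exact Set.mem_insert _ _)
  have hq : q = x := key q (by rw [hs]; exact Set.mem_insert_of_mem _ rfl)
  exact hpq (hp.trans hq.symm)

/-- Case X = {x}, Y = {y₁, y₂}, x ∉ Y. -/
lemma case12far {x y1 y2 : W} (hx1 : x ≠ y1) (hx2 : x ≠ y2) (hy : y1 ≠ y2)
    (h : NminusClosed R x = NminusSet R {y1, y2}) : False := by
  have hy1 : y1 ∈ Nminus R x := by
    have : y1 ∈ NminusClosed R x := by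
      rw [h]; exact mem_nset_pair.mpr (Or.inl (Or.inl rfl))
    rcases mem_nclosed.mp this with h1 | h1
    · exact absurd h1.symm hx1
    · exact h1
  have hy2 : y2 ∈ Nminus R x := by
    have : y2 ∈ NminusClosed R x := by
      rw [h]; exact mem_nset_pair.mpr (Or.inr (Or.inl rfl))
    rcases mem_nclosed.mp this with h1 | h1
    · exact absurd h1.symm hx2
    · exact h1
  have hNx : Nminus R x = {y1, y2} := eq_pair_of_mem hC hy1 hy2 hy
  -- every element of N y1 is x or y2
  have key1 : ∀ t, t ∈ Nminus R y1 → t = x ∨ t = y2 := by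
    intro t ht
    have ht' : t ∈ NminusClosed R x := by
      rw [h]; exact mem_nset_pair.mpr (Or.inl (Or.inr ht))
    rcases mem_nclosed.mp ht' with h1 | h1
    · exact Or.inl h1
    · rw [hNx] at h1
      rcases pair_cases h1 with rfl | rfl
      · exact absurd ht (hI t)
      · exact Or.inr rfl
  have key2 : ∀ t, t ∈ Nminus R y2 → t = x ∨ t = y1 := by
    intro t ht
    have ht' : t ∈ NminusClosed R x := by
      rw [h]; exact mem_nset_pair.mpr (Or.inr (Or.inr ht))
    rcases mem_nclosed.mp ht' with h1 | h1
    · exact Or.inl h1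
    · rw [hNx] at h1
      rcases pair_cases h1 with rfl | rfl
      · exact Or.inr rfl
      · exact absurd ht (hI t)
  -- x ∈ N y1 and x ∈ N y2, and y2 ∈ N y1
  obtain ⟨p, q, hpq, hs⟩ := two_elems hC y1
  have hp := key1 p (by rw [hs]; exact Set.mem_insert _ _)
  have hq := key1 q (by rw [hs]; exact Set.mem_insert_of_mem _ rfl)
  have hxy1 : x ∈ Nminus R y1 ∧ y2 ∈ Nminus R y1 := by
    have hpm : p ∈ Nminus R y1 := by rw [hs]; exact Set.mem_insert _ _
    have hqm : q ∈ Nminus R y1 := by rw [hs]; exact Set.mem_insert_of_mem _ rfl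
    rcases hp with rfl | rfl <;> rcases hq with rfl | rfl
    · exact absurd rfl hpq
    · exact ⟨hpm, hqm⟩
    · exact ⟨hqm, hpm⟩
    · exact absurd rfl hpq
  obtain ⟨p', q', hpq', hs'⟩ := two_elems hC y2
  have hp' := key2 p' (by rw [hs']; exact Set.mem_insert _ _)
  have hq' := key2 q' (by rw [hs']; exact Set.mem_insert_of_mem _ rfl)
  have hxy2 : x ∈ Nminus R y2 := by
    have hpm : p' ∈ Nminus R y2 := by rw [hs']; exact Set.mem_insert _ _
    have hqm : q' ∈ Nminus R y2 := by rw [hs']; exact Set.mem_insert_of_mem _ rfl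
    rcases hp' with rfl | rfl <;> rcases hq' with rfl | rfl
    · exact absurd rfl hpq'
    · exact hpm
    · exact hqm
    · exact absurd rfl hpq'
  have heq12 : Nminus R y1 = Nminus R y2 := hD hxy1.1 hxy2
  have : y2 ∈ Nminus R y2 := by rw [← heq12]; exact hxy1.2
  exact absurd this (hI y2)

end Core

/-- If every element of `N⁻(v)` equals `c`, contradiction with in-degree 2. -/
lemma not_all_eq (hC : ∀ v : W, (Nminus R v).ncard = 2) {v c : W}
    (key : ∀ t, t ∈ Nminus R v → t = c) : False := by
  obtain ⟨p, q, hpq, hs⟩ := two_elems hC v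
  have hp := key p (by rw [hs]; exact Set.mem_insert _ _)
  have hq := key q (by rw [hs]; exact Set.mem_insert_of_mem _ rfl)
  exact hpq (hp.trans hq.symm)

/-- If every element of `N⁻(v)` is `c` or `d` with `c ≠ d`, then both are in. -/
lemma pair_mem_of_key (hC : ∀ v : W, (Nminus R v).ncard = 2) {v c d : W} (hcd : c ≠ d)
    (key : ∀ t, t ∈ Nminus R v → t = c ∨ t = d) :
    c ∈ Nminus R v ∧ d ∈ Nminus R v := by
  obtain ⟨p, q, hpq, hs⟩ := two_elems hC v
  have hp := key p (by rw [hs]; exact Set.mem_insert _ _)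
  have hq := key q (by rw [hs]; exact Set.mem_insert_of_mem _ rfl)
  have hpm : p ∈ Nminus R v := by rw [hs]; exact Set.mem_insert _ _
  have hqm : q ∈ Nminus R v := by rw [hs]; exact Set.mem_insert_of_mem _ rfl
  rcases hp with rfl | rfl <;> rcases hq with rfl | rfl
  · exact absurd rfl hpq
  · exact ⟨hpm, hqm⟩
  · exact ⟨hqm, hpm⟩
  · exact absurd rfl hpq

section Core2

variable (hC : ∀ v : W, (Nminus R v).ncard = 2)
variable (hD : ∀ ⦃u v w : W⦄, w ∈ Nminus R u → w ∈ Nminus R v → Nminus R u = Nminus R v)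
variable (hI : ∀ v : W, v ∉ Nminus R v)
variable (hE : ∀ ⦃a b w : W⦄, a ∈ Nminus R w → b ∈ Nminus R w → Nminus R a = Nminus R b → a = b)
include hC hD hI hE

lemma case22ww {a b w : W} (hab : a ≠ b) (hbw : b ≠ w)
    (haw : a ∈ Nminus R w) (hbww : b ∈ Nminus R w)
    (h : NminusSet R {a, w} = NminusSet R {b, w}) : False := by
  have hmem : ∀ t : W, ((t = a ∨ t ∈ Nminus R a) ∨ (t = w ∨ t ∈ Nminus R w)) ↔
      ((t = b ∨ t ∈ Nminus R b) ∨ (t = w ∨ t ∈ Nminus R w)) := fun t => by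
    rw [← mem_nset_pair, ← mem_nset_pair, h]
  have hNw : Nminus R w = {a, b} := eq_pair_of_mem hC haw hbww hab
  have keyA : ∀ t, t ∈ Nminus R a → t = b ∨ t = w := by
    intro t ht
    rcases (hmem t).mp (Or.inl (Or.inr ht)) with (h1 | h1) | (h1 | h1)
    · exact Or.inl h1
    · exact absurd (hE haw hbww (hD ht h1)) hab
    · exact Or.inr h1
    · rw [hNw] at h1
      rcases pair_cases h1 with rfl | rfl
      · exact absurd ht (hI t)
      · exact Or.inl rfl
  have keyB : ∀ t, t ∈ Nminus R b → t = a ∨ t = w := by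
    intro t ht
    rcases (hmem t).mpr (Or.inl (Or.inr ht)) with (h1 | h1) | (h1 | h1)
    · exact Or.inl h1
    · exact absurd (hE haw hbww (hD h1 ht)) hab
    · exact Or.inr h1
    · rw [hNw] at h1
      rcases pair_cases h1 with rfl | rfl
      · exact Or.inl rfl
      · exact absurd ht (hI t)
  have hwa : w ∈ Nminus R a := (pair_mem_of_key hC hbw keyA).2
  have haw' : a ≠ w := fun h' => hI w (h' ▸ haw)
  have hwb : w ∈ Nminus R b := (pair_mem_of_key hC haw' keyB).2
  exact absurd (hE haw hbww (hD hwa hwb)) hab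

lemma case22wa {a b w : W} (hab : a ≠ b) (hbw : b ≠ w)
    (haw : a ∈ Nminus R w) (hba : b ∈ Nminus R a)
    (h : NminusSet R {a, w} = NminusSet R {b, w}) : False := by
  have hmem : ∀ t : W, ((t = a ∨ t ∈ Nminus R a) ∨ (t = w ∨ t ∈ Nminus R w)) ↔
      ((t = b ∨ t ∈ Nminus R b) ∨ (t = w ∨ t ∈ Nminus R w)) := fun t => by
    rw [← mem_nset_pair, ← mem_nset_pair, h]
  have keyB : ∀ t, t ∈ Nminus R b → Nminus R b = Nminus R w ∨ t = w := by
    intro t ht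
    rcases (hmem t).mpr (Or.inl (Or.inr ht)) with (h1 | h1) | (h1 | h1)
    · subst h1
      exact Or.inl (hD ht haw)
    · have := hD ht h1
      rw [← this] at hba
      exact absurd hba (hI b)
    · exact Or.inr h1
    · exact Or.inl (hD ht h1)
  by_cases hK : Nminus R b = Nminus R w
  · obtain ⟨r, hrb, hNa⟩ := other_elem hC hba
    have hr : r ∈ Nminus R a := by rw [hNa]; exact Set.mem_insert_of_mem _ rfl
    rcases (hmem r).mp (Or.inl (Or.inr hr)) with (h1 | h1) | (h1 | h1)
    · exact hrb h1
    · have heq := hD hr h1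
      rw [heq] at hba
      exact absurd hba (hI b)
    · subst h1
      exact absurd (hE hba hr hK) hbw
    · have heq : Nminus R a = Nminus R b := (hD hr h1).trans hK.symm
      rw [heq] at hba
      exact absurd hba (hI b)
  · exact not_all_eq hC (fun t ht => (keyB t ht).resolve_left hK)

lemma case22ab {a b w : W} (hab : a ≠ b) (haw : a ≠ w) (hbw : b ≠ w)
    (hanb : a ∈ Nminus R b) (hba : b ∈ Nminus R a)
    (h : NminusSet R {a, w} = NminusSet R {b, w}) : False := by
  have hmem : ∀ t : W, ((t = a ∨ t ∈ Nminus R a) ∨ (t = w ∨ t ∈ Nminus R w)) ↔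
      ((t = b ∨ t ∈ Nminus R b) ∨ (t = w ∨ t ∈ Nminus R w)) := fun t => by
    rw [← mem_nset_pair, ← mem_nset_pair, h]
  obtain ⟨r, hrb, hNa⟩ := other_elem hC hba
  obtain ⟨s, hsa, hNb⟩ := other_elem hC hanb
  have hr : r ∈ Nminus R a := by rw [hNa]; exact Set.mem_insert_of_mem _ rfl
  have hs : s ∈ Nminus R b := by rw [hNb]; exact Set.mem_insert_of_mem _ rfl
  have hloopa : Nminus R a = Nminus R b → False := by
    intro heq
    rw [heq] at hba
    exact hI b hba
  -- r is w or in N w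
  have hrw : r = w ∨ r ∈ Nminus R w := by
    rcases (hmem r).mp (Or.inl (Or.inr hr)) with (h1 | h1) | (h1 | h1)
    · exact absurd h1 hrb
    · exact absurd (hD hr h1) hloopa
    · exact Or.inl h1
    · exact Or.inr h1
  have hsw : s = w ∨ s ∈ Nminus R w := by
    rcases (hmem s).mpr (Or.inl (Or.inr hs)) with (h1 | h1) | (h1 | h1)
    · exact absurd h1 hsa
    · exact absurd (hD h1 hs) hloopa
    · exact Or.inl h1
    · exact Or.inr h1
  rcases hrw with rfl | hrw <;> rcases hsw with rfl | hsw
  · -- r = w = s : w ∈ N a and w ∈ N b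
    exact absurd (hD hr hs) hloopa
  · -- r = w, s ∈ N w : N b = N w, then b, w ∈ N a with N b = N w
    exact absurd (hE hba hr (hD hs hsw)) hbw
  · -- r ∈ N w, s = w : N a = N w, a, w ∈ N b
    exact absurd (hE hanb hs (hD hr hrw)) haw
  · -- both in N w
    exact absurd ((hD hr hrw).trans (hD hs hsw).symm) hloopa

/-- Case X = {a,w}, Y = {b,w}, with a, b, w pairwise distinct. -/
lemma case22shared {a b w : W} (hab : a ≠ b) (haw : a ≠ w) (hbw : b ≠ w)
    (h : NminusSet R {a, w} = NminusSet R {b, w}) : False := by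
  have hmem : ∀ t : W, ((t = a ∨ t ∈ Nminus R a) ∨ (t = w ∨ t ∈ Nminus R w)) ↔
      ((t = b ∨ t ∈ Nminus R b) ∨ (t = w ∨ t ∈ Nminus R w)) := fun t => by
    rw [← mem_nset_pair, ← mem_nset_pair, h]
  have hA : a ∈ Nminus R b ∨ a ∈ Nminus R w := by
    rcases (hmem a).mp (Or.inl (Or.inl rfl)) with (h1 | h1) | (h1 | h1)
    · exact absurd h1 hab
    · exact Or.inl h1
    · exact absurd h1 haw
    · exact Or.inr h1
  have hB : b ∈ Nminus R a ∨ b ∈ Nminus R w := by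
    rcases (hmem b).mpr (Or.inl (Or.inl rfl)) with (h1 | h1) | (h1 | h1)
    · exact absurd h1 hab.symm
    · exact Or.inl h1
    · exact absurd h1 hbw
    · exact Or.inr h1
  rcases hA with hA | hA <;> rcases hB with hB | hB
  · exact case22ab hC hD hI hE hab haw hbw hA hB h
  · exact case22wa hC hD hI hE hab.symm haw hB hA h.symm
  · exact case22wa hC hD hI hE hab hbw hA hB h
  · exact case22ww hC hD hI hE hab hbw hA hB h

end Core2

/-- The forbidden configuration. -/
def BadCfg (R : W → W → Prop) : Prop :=
  ∃ x x' y y' : W,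
    x ≠ x' ∧ x ≠ y ∧ x ≠ y' ∧ x' ≠ y ∧ x' ≠ y' ∧ y ≠ y' ∧
    Nminus R x = {y, y'} ∧ Nminus R y = {x, x'} ∧
    (Nminus R x' ∩ Nminus R y').Nonempty

section Core3

variable (hC : ∀ v : W, (Nminus R v).ncard = 2)
variable (hD : ∀ ⦃u v w : W⦄, w ∈ Nminus R u → w ∈ Nminus R v → Nminus R u = Nminus R v)
variable (hI : ∀ v : W, v ∉ Nminus R v)
variable (hE : ∀ ⦃a b w : W⦄, a ∈ Nminus R w → b ∈ Nminus R w → Nminus R a = Nminus R b → a = b)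
include hC hD hI hE

/-- The "crossed" disjoint configuration is impossible. -/
lemma caseBeta {x1 x2 y1 y2 : W}
    (hy1 : y1 ∈ Nminus R x1) (hx1 : x1 ∈ Nminus R y2) (hne1 : y2 ∉ Nminus R x1)
    (h : NminusSet R {x1, x2} = NminusSet R {y1, y2}) : False := by
  have hmem : ∀ t : W, ((t = x1 ∨ t ∈ Nminus R x1) ∨ (t = x2 ∨ t ∈ Nminus R x2)) ↔
      ((t = y1 ∨ t ∈ Nminus R y1) ∨ (t = y2 ∨ t ∈ Nminus R y2)) := fun t => by
    rw [← mem_nset_pair, ← mem_nset_pair, h]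
  apply not_all_eq hC (v := x1) (c := y1)
  intro t ht
  rcases (hmem t).mp (Or.inl (Or.inr ht)) with (h1 | h1) | (h1 | h1)
  · exact h1
  · have heq := hD ht h1
    rw [heq] at hy1
    exact absurd hy1 (hI y1)
  · exact absurd (h1 ▸ ht) hne1
  · have heq := hD ht h1
    rw [← heq] at hx1
    exact absurd hx1 (hI x1)

/-- The "parallel" disjoint configuration is impossible. -/
lemma caseAlpha {x1 x2 y1 y2 : W} (hy1x2 : y1 ≠ x2)
    (hy1 : y1 ∈ Nminus R x1) (hy2 : y2 ∈ Nminus R x2) (hx2 : x2 ∈ Nminus R y2)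
    (hne1 : y2 ∉ Nminus R x1) (hne2 : y1 ∉ Nminus R x2)
    (h : NminusSet R {x1, x2} = NminusSet R {y1, y2}) : False := by
  have hmem : ∀ t : W, ((t = x1 ∨ t ∈ Nminus R x1) ∨ (t = x2 ∨ t ∈ Nminus R x2)) ↔
      ((t = y1 ∨ t ∈ Nminus R y1) ∨ (t = y2 ∨ t ∈ Nminus R y2)) := fun t => by
    rw [← mem_nset_pair, ← mem_nset_pair, h]
  -- Step 1: N x1 = N y2
  have K1 : Nminus R x1 = Nminus R y2 := by
    by_cases hK : Nminus R x1 = Nminus R y2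
    · exact hK
    exfalso
    apply not_all_eq hC (v := x1) (c := y1)
    intro t ht
    rcases (hmem t).mp (Or.inl (Or.inr ht)) with (h1 | h1) | (h1 | h1)
    · exact h1
    · have heq := hD ht h1
      rw [heq] at hy1
      exact absurd hy1 (hI y1)
    · exact absurd (h1 ▸ ht) hne1
    · exact absurd (hD ht h1) hK
  -- Step 2: N x2 = N y1
  have K2 : Nminus R x2 = Nminus R y1 := by
    by_cases hK : Nminus R x2 = Nminus R y1
    · exact hK
    exfalso
    apply not_all_eq hC (v := x2) (c := y2)
    intro t ht
    rcases (hmem t).mp (Or.inr (Or.inr ht)) with (h1 | h1) | (h1 | h1)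
    · exact absurd (h1 ▸ ht) hne2
    · exact absurd (hD ht h1) hK
    · exact h1
    · have heq := hD ht h1
      rw [heq] at hy2
      exact absurd hy2 (hI y2)
  have hx2x1 : x2 ∈ Nminus R x1 := by rw [K1]; exact hx2
  exact absurd (hE hy1 hx2x1 K2.symm) hy1x2

/-- Produce the forbidden configuration when `N⁻(x1) = {y1, y2}` and `x1 ∈ N⁻(y1)`. -/
lemma mkCfgCore {x1 x2 y1 y2 : W}
    (d12 : x1 ≠ x2) (d1y1 : x1 ≠ y1) (d1y2 : x1 ≠ y2) (d2y1 : x2 ≠ y1) (d2y2 : x2 ≠ y2)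
    (dy : y1 ≠ y2)
    (h : NminusSet R {x1, x2} = NminusSet R {y1, y2})
    (h1 : Nminus R x1 = {y1, y2}) (h2 : x1 ∈ Nminus R y1) : BadCfg R := by
  have hmem : ∀ t : W, ((t = x1 ∨ t ∈ Nminus R x1) ∨ (t = x2 ∨ t ∈ Nminus R x2)) ↔
      ((t = y1 ∨ t ∈ Nminus R y1) ∨ (t = y2 ∨ t ∈ Nminus R y2)) := fun t => by
    rw [← mem_nset_pair, ← mem_nset_pair, h]
  have hy1n : y1 ∈ Nminus R x1 := by rw [h1]; exact Set.mem_insert _ _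
  have hy2n : y2 ∈ Nminus R x1 := by rw [h1]; exact Set.mem_insert_of_mem _ rfl
  obtain ⟨s, hs_ne, hNy1⟩ := other_elem hC h2
  have hs : s ∈ Nminus R y1 := by rw [hNy1]; exact Set.mem_insert_of_mem _ rfl
  by_cases hsx2 : s = x2
  · rw [hsx2] at hNy1 hs
    by_cases hint : (Nminus R x2 ∩ Nminus R y2).Nonempty
    · exact ⟨x1, x2, y1, y2, d12, d1y1, d1y2, d2y1, d2y2, dy, h1, hNy1, hint⟩
    exfalso
    obtain ⟨t, ht⟩ := n_nonempty hC x2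
    have hx2y1 : x2 ∈ Nminus R y1 := hs
    rcases (hmem t).mp (Or.inr (Or.inr ht)) with (h1' | h1') | (h1' | h1')
    · -- t = y1 : y1 ∈ N x2 and y1 ∈ N x1, so N x1 = N x2, then hE on y1 gives x1 = x2
      rw [h1'] at ht
      exact d12 (hE h2 hx2y1 (hD hy1n ht))
    · -- t ∈ N y1 = {x1, x2}
      rw [hNy1] at h1'
      rcases pair_cases h1' with h2' | h2'
      · -- x1 ∈ N x2 and x1 ∈ N y1 : N x2 = N y1 = {x1,x2}, so x2 ∈ N x2, loop
        rw [h2'] at ht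
        have heq := hD ht h2
        have : x2 ∈ Nminus R x2 := by rw [heq, hNy1]; exact Set.mem_insert_of_mem _ rfl
        exact hI x2 this
      · rw [h2'] at ht
        exact hI x2 ht
    · rw [h1'] at ht
      exact d12 (hE h2 hx2y1 (hD hy2n ht))
    · exact hint ⟨t, ht, h1'⟩
  · exfalso
    -- s ≠ x2; locate s
    have hs_ne_x1 : s ≠ x1 := hs_ne
    have hK : Nminus R x2 = Nminus R y1 := by
      rcases (hmem s).mpr (Or.inl (Or.inr hs)) with (h1' | h1') | (h1' | h1')
      · exact absurd h1' hs_ne_x1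
      · rw [h1] at h1'
        rcases pair_cases h1' with rfl | rfl
        · exact absurd hs (hI s)
        · have heq := hD hs hy2n
          have : y1 ∈ Nminus R y1 := by rw [heq]; exact hy1n
          exact absurd this (hI y1)
      · exact absurd h1' hsx2
      · exact hD h1' hs
    -- x2 ∈ N y2
    have hx2y2 : x2 ∈ Nminus R y2 := by
      rcases (hmem x2).mp (Or.inr (Or.inl rfl)) with (h1' | h1') | (h1' | h1')
      · exact absurd h1' d2y1
      · rw [hNy1] at h1'
        rcases pair_cases h1' with h2' | h2'
        · exact absurd h2' d12.symm
        · exact absurd h2' (fun hh => hsx2 hh.symm)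
      · exact absurd h1' d2y2
      · exact h1'
    obtain ⟨p, hp_ne, hNy2⟩ := other_elem hC hx2y2
    have hp : p ∈ Nminus R y2 := by rw [hNy2]; exact Set.mem_insert_of_mem _ rfl
    rcases (hmem p).mpr (Or.inr (Or.inr hp)) with (h1' | h1') | (h1' | h1')
    · -- p = x1 : x1 ∈ N y2 and x1 ∈ N y1, so N y2 = N y1, i.e. {x2,x1} = {x1,s}
      rw [h1'] at hp hNy2
      have heq := hD hp h2
      rw [hNy2, hNy1] at heq
      rcases pair_eq_first heq with h2' | h2'
      · exact d12 h2'.symm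
      · exact hsx2 h2'.symm
    · -- p ∈ N x1 = {y1, y2}
      rw [h1] at h1'
      rcases pair_cases h1' with h2' | h2'
      · -- y1 ∈ N y2 and y1 ∈ N x1 : N y2 = N x1 = {y1,y2}, so y2 ∈ N y2, loop
        rw [h2'] at hp
        have heq := hD hp hy1n
        have : y2 ∈ Nminus R y2 := by rw [heq, h1]; exact Set.mem_insert_of_mem _ rfl
        exact hI y2 this
      · rw [h2'] at hp
        exact hI y2 hp
    · exact hp_ne h1'
    · -- p ∈ N x2 : N y2 = N x2 = N y1, then hE on y1 y2 ∈ N x1 gives y1 = y2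
      have heq : Nminus R y1 = Nminus R y2 := hK.symm.trans (hD h1' hp)
      exact dy (hE hy1n hy2n heq)

end Core3

section Core4

variable (hC : ∀ v : W, (Nminus R v).ncard = 2)
variable (hD : ∀ ⦃u v w : W⦄, w ∈ Nminus R u → w ∈ Nminus R v → Nminus R u = Nminus R v)
variable (hI : ∀ v : W, v ∉ Nminus R v)
variable (hE : ∀ ⦃a b w : W⦄, a ∈ Nminus R w → b ∈ Nminus R w → Nminus R a = Nminus R b → a = b)
include hC hD hI hE

/-- Produce the forbidden configuration when `N⁻(x1) = {y1, y2}`. -/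
lemma mkCfg {x1 x2 y1 y2 : W}
    (d12 : x1 ≠ x2) (d1y1 : x1 ≠ y1) (d1y2 : x1 ≠ y2) (d2y1 : x2 ≠ y1) (d2y2 : x2 ≠ y2)
    (dy : y1 ≠ y2)
    (h : NminusSet R {x1, x2} = NminusSet R {y1, y2})
    (h1 : Nminus R x1 = {y1, y2}) : BadCfg R := by
  have hmem : ∀ t : W, ((t = x1 ∨ t ∈ Nminus R x1) ∨ (t = x2 ∨ t ∈ Nminus R x2)) ↔
      ((t = y1 ∨ t ∈ Nminus R y1) ∨ (t = y2 ∨ t ∈ Nminus R y2)) := fun t => by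
    rw [← mem_nset_pair, ← mem_nset_pair, h]
  rcases (hmem x1).mp (Or.inl (Or.inl rfl)) with (h' | h') | (h' | h')
  · exact absurd h' d1y1
  · exact mkCfgCore hC hD hI hE d12 d1y1 d1y2 d2y1 d2y2 dy h h1 h'
  · exact absurd h' d1y2
  · have h1' : Nminus R x1 = {y2, y1} := by rw [h1, Set.pair_comm]
    have hswap : NminusSet R {x1, x2} = NminusSet R {y2, y1} := by
      rw [Set.pair_comm y2 y1]; exact h
    exact mkCfgCore hC hD hI hE d12 d1y2 d1y1 d2y2 d2y1 dy.symm hswap h1' h'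

/-- Case |X| = |Y| = 2, X ∩ Y = ∅. -/
lemma case22disj {x1 x2 y1 y2 : W}
    (dx : x1 ≠ x2) (dy : y1 ≠ y2) (d11 : x1 ≠ y1) (d12 : x1 ≠ y2) (d21 : x2 ≠ y1)
    (d22 : x2 ≠ y2)
    (h : NminusSet R {x1, x2} = NminusSet R {y1, y2}) : BadCfg R := by
  have hmem : ∀ t : W, ((t = x1 ∨ t ∈ Nminus R x1) ∨ (t = x2 ∨ t ∈ Nminus R x2)) ↔
      ((t = y1 ∨ t ∈ Nminus R y1) ∨ (t = y2 ∨ t ∈ Nminus R y2)) := fun t => by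
    rw [← mem_nset_pair, ← mem_nset_pair, h]
  have hy1m : y1 ∈ Nminus R x1 ∨ y1 ∈ Nminus R x2 := by
    rcases (hmem y1).mpr (Or.inl (Or.inl rfl)) with (h' | h') | (h' | h')
    · exact absurd h'.symm d11
    · exact Or.inl h'
    · exact absurd h'.symm d21
    · exact Or.inr h'
  have hy2m : y2 ∈ Nminus R x1 ∨ y2 ∈ Nminus R x2 := by
    rcases (hmem y2).mpr (Or.inr (Or.inl rfl)) with (h' | h') | (h' | h')
    · exact absurd h'.symm d12
    · exact Or.inl h'
    · exact absurd h'.symm d22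
    · exact Or.inr h'
  have hx1m : x1 ∈ Nminus R y1 ∨ x1 ∈ Nminus R y2 := by
    rcases (hmem x1).mp (Or.inl (Or.inl rfl)) with (h' | h') | (h' | h')
    · exact absurd h' d11
    · exact Or.inl h'
    · exact absurd h' d12
    · exact Or.inr h'
  have hx2m : x2 ∈ Nminus R y1 ∨ x2 ∈ Nminus R y2 := by
    rcases (hmem x2).mp (Or.inr (Or.inl rfl)) with (h' | h') | (h' | h')
    · exact absurd h' d21
    · exact Or.inl h'
    · exact absurd h' d22
    · exact Or.inr h'
  by_cases c1 : y2 ∈ Nminus R x1 ∧ y1 ∈ Nminus R x1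
  · exact mkCfg hC hD hI hE dx d11 d12 d21 d22 dy h (eq_pair_of_mem hC c1.2 c1.1 dy)
  by_cases c2 : y1 ∈ Nminus R x2 ∧ y2 ∈ Nminus R x2
  · have h' : NminusSet R {x2, x1} = NminusSet R {y1, y2} := by
      rw [Set.pair_comm x2 x1]; exact h
    exact mkCfg hC hD hI hE dx.symm d21 d22 d11 d12 dy h' (eq_pair_of_mem hC c2.1 c2.2 dy)
  by_cases c3 : x1 ∈ Nminus R y1 ∧ x2 ∈ Nminus R y1
  · exact mkCfg hC hD hI hE dy d11.symm d21.symm d12.symm d22.symm dx h.symm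
      (eq_pair_of_mem hC c3.1 c3.2 dx)
  by_cases c4 : x1 ∈ Nminus R y2 ∧ x2 ∈ Nminus R y2
  · have h' : NminusSet R {y2, y1} = NminusSet R {x1, x2} := by
      rw [Set.pair_comm y2 y1]; exact h.symm
    exact mkCfg hC hD hI hE dy.symm d12.symm d22.symm d11.symm d21.symm dx h'
      (eq_pair_of_mem hC c4.1 c4.2 dx)
  exfalso
  rcases hy1m with hy1 | hy1
  · have hy2 : y2 ∈ Nminus R x2 := by
      rcases hy2m with hh | hh
      · exact absurd ⟨hh, hy1⟩ c1
      · exact hh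
    have hne1 : y2 ∉ Nminus R x1 := fun hh => c1 ⟨hh, hy1⟩
    have hne2 : y1 ∉ Nminus R x2 := by
      intro hh
      have heq := hD hh hy1
      rw [heq] at hy2
      exact hne1 hy2
    rcases hx2m with hx2 | hx2
    · have hx1 : x1 ∈ Nminus R y2 := by
        rcases hx1m with hh | hh
        · exact absurd ⟨hh, hx2⟩ c3
        · exact hh
      exact caseBeta hC hD hI hE hy1 hx1 hne1 h
    · exact caseAlpha hC hD hI hE d21.symm hy1 hy2 hx2 hne1 hne2 h
  · have h' : NminusSet R {x2, x1} = NminusSet R {y1, y2} := by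
      rw [Set.pair_comm x2 x1]; exact h
    have hy2 : y2 ∈ Nminus R x1 := by
      rcases hy2m with hh | hh
      · exact hh
      · exact absurd ⟨hy1, hh⟩ c2
    have hne1 : y2 ∉ Nminus R x2 := fun hh => c2 ⟨hy1, hh⟩
    have hne2 : y1 ∉ Nminus R x1 := by
      intro hh
      have heq := hD hh hy1
      rw [heq] at hy2
      exact hne1 hy2
    rcases hx1m with hx1 | hx1
    · have hx2' : x2 ∈ Nminus R y2 := by
        rcases hx2m with hh | hh
        · exact absurd ⟨hx1, hh⟩ c3
        · exact hh
      exact caseBeta hC hD hI hE hy1 hx2' hne1 h'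
    · exact caseAlpha hC hD hI hE d11.symm hy1 hy2 hx1 hne1 hne2 h'

end Core4

section Core5

variable (hC : ∀ v : W, (Nminus R v).ncard = 2)
variable (hD : ∀ ⦃u v w : W⦄, w ∈ Nminus R u → w ∈ Nminus R v → Nminus R u = Nminus R v)
variable (hI : ∀ v : W, v ∉ Nminus R v)
include hC hD hI

/-- Case |X| = 1, |Y| = 2. -/
lemma case12full {x y1 y2 : W} (dy : y1 ≠ y2)
    (h : NminusClosed R x = NminusSet R {y1, y2}) : False := by
  by_cases h1 : x = y1
  · rw [← h1] at h dy
    exact case12core hC hD hI dy.symm h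
  · by_cases h2 : x = y2
    · rw [← h2] at h dy
      rw [Set.pair_comm y1 x] at h
      exact case12core hC hD hI dy h
    · exact case12far hC hD hI h1 h2 dy h

end Core5

/-- The abstract theorem. -/
theorem abstract_id_iff [Finite W]
    (hC : ∀ v : W, (Nminus R v).ncard = 2)
    (hD : ∀ ⦃u v w : W⦄, w ∈ Nminus R u → w ∈ Nminus R v → Nminus R u = Nminus R v)
    (hI : ∀ v : W, v ∉ Nminus R v)
    (hE : ∀ ⦃a b w : W⦄, a ∈ Nminus R w → b ∈ Nminus R w → Nminus R a = Nminus R b → a = b) :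
    AdmitsIdCode R 2 ↔ ¬ BadCfg R := by
  constructor
  · intro hAdm hbad
    obtain ⟨x, x', y, y', d1, d2, d3, d4, d5, d6, hnx, hny, hint⟩ := hbad
    obtain ⟨z, hz1, hz2⟩ := hint
    have hxy' : Nminus R x' = Nminus R y' := hD hz1 hz2
    have hXY : ({x, x'} : Set W) ≠ {y, y'} := by
      intro hXY
      have : x ∈ ({y, y'} : Set W) := by rw [← hXY]; exact Set.mem_insert _ _
      rcases pair_cases this with h' | h'
      · exact d2 h'
      · exact d3 h'
    have heq : NminusSet R {x, x'} = NminusSet R {y, y'} := by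
      ext t
      rw [mem_nset_pair, mem_nset_pair, hnx, hny, hxy']
      simp only [Set.mem_insert_iff, Set.mem_singleton_iff]
      tauto
    exact hAdm {x, x'} {y, y'} ⟨x, Set.mem_insert _ _⟩ ⟨y, Set.mem_insert _ _⟩
      (le_of_eq (Set.ncard_pair d1)) (le_of_eq (Set.ncard_pair d6)) hXY heq
  · intro hno X Y hXne hYne hX2 hY2 hne heq
    have hXpos : 0 < X.ncard := (Set.ncard_pos (Set.toFinite X)).mpr hXne
    have hYpos : 0 < Y.ncard := (Set.ncard_pos (Set.toFinite Y)).mpr hYne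
    have hX12 : X.ncard = 1 ∨ X.ncard = 2 := by omega
    have hY12 : Y.ncard = 1 ∨ Y.ncard = 2 := by omega
    rcases hX12 with hX1 | hX1 <;> rcases hY12 with hY1 | hY1
    · obtain ⟨x, rfl⟩ := Set.ncard_eq_one.mp hX1
      obtain ⟨y, rfl⟩ := Set.ncard_eq_one.mp hY1
      rw [nset_singleton, nset_singleton] at heq
      exact case11 hC hD hI (fun hxy => hne (by rw [hxy])) heq
    · obtain ⟨x, rfl⟩ := Set.ncard_eq_one.mp hX1
      obtain ⟨y1, y2, dy, rfl⟩ := Set.ncard_eq_two.mp hY1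
      rw [nset_singleton] at heq
      exact case12full hC hD hI dy heq
    · obtain ⟨x1, x2, dx, rfl⟩ := Set.ncard_eq_two.mp hX1
      obtain ⟨y, rfl⟩ := Set.ncard_eq_one.mp hY1
      rw [nset_singleton] at heq
      exact case12full hC hD hI dx heq.symm
    · obtain ⟨x1, x2, dx, rfl⟩ := Set.ncard_eq_two.mp hX1
      obtain ⟨y1, y2, dy, rfl⟩ := Set.ncard_eq_two.mp hY1
      by_cases e11 : x1 = y1
      · by_cases e22 : x2 = y2
        · exact hne (by rw [e11, e22])
        · rw [← e11] at heq dy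
          have h' : NminusSet R {x2, x1} = NminusSet R {y2, x1} := by
            rw [Set.pair_comm x2 x1, Set.pair_comm y2 x1]; exact heq
          exact case22shared hC hD hI hE e22 dx.symm (fun hh => dy hh.symm) h'
      · by_cases e12 : x1 = y2
        · by_cases e21 : x2 = y1
          · exact hne (by rw [← e21, ← e12]; exact Set.pair_comm x1 x2)
          · rw [← e12] at heq
            have h' : NminusSet R {x2, x1} = NminusSet R {y1, x1} := by
              rw [Set.pair_comm x2 x1]; exact heq
            exact case22shared hC hD hI hE e21 dx.symm (fun hh => e11 hh.symm) h'
        · by_cases e21 : x2 = y1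
          · rw [← e21] at heq dy
            have h' : NminusSet R {x1, x2} = NminusSet R {y2, x2} := by
              rw [Set.pair_comm y2 x2]; exact heq
            exact case22shared hC hD hI hE e12 dx dy.symm h'
          · by_cases e22 : x2 = y2
            · rw [← e22] at heq
              exact case22shared hC hD hI hE e11 dx (fun hh => e21 hh.symm) heq
            · exact absurd (case22disj hC hD hI hE dx dy e11 e12 e21 e22 heq) hno

section LineInst

variable {V : Type*} {A : V → V → Prop}

lemma line_mem {e f : LineVertex A} : f ∈ Nminus (LineAdj A) e ↔ f.val.2 = e.val.1 :=
  Iff.rfl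

lemma line_hC (hreg : ∀ v, (Nminus A v).ncard = 2) (e : LineVertex A) :
    (Nminus (LineAdj A) e).ncard = 2 := by
  have himg : (fun f : LineVertex A => f.val.1) '' Nminus (LineAdj A) e
      = Nminus A e.val.1 := by
    ext u
    constructor
    · rintro ⟨f, hf, rfl⟩
      have hp := f.property
      have h2 : f.val.2 = e.val.1 := hf
      rw [h2] at hp
      exact hp
    · intro hu
      exact ⟨⟨(u, e.val.1), hu⟩, rfl, rfl⟩
  have hinj : Set.InjOn (fun f : LineVertex A => f.val.1) (Nminus (LineAdj A) e) := by
    intro f hf g hg hfg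
    have hf2 : f.val.2 = e.val.1 := hf
    have hg2 : g.val.2 = e.val.1 := hg
    exact Subtype.ext (Prod.ext hfg (hf2.trans hg2.symm))
  calc (Nminus (LineAdj A) e).ncard
      = ((fun f : LineVertex A => f.val.1) '' Nminus (LineAdj A) e).ncard :=
        (Set.ncard_image_of_injOn hinj).symm
    _ = 2 := by rw [himg]; exact hreg e.val.1

lemma line_tail {e f : LineVertex A} (h : e.val.1 = f.val.1) :
    Nminus (LineAdj A) e = Nminus (LineAdj A) f := by
  ext g
  change g.val.2 = e.val.1 ↔ g.val.2 = f.val.1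
  rw [h]

lemma line_hD : ∀ ⦃u v w : LineVertex A⦄, w ∈ Nminus (LineAdj A) u →
    w ∈ Nminus (LineAdj A) v →
    Nminus (LineAdj A) u = Nminus (LineAdj A) v := by
  intro u v w hu hv
  have hu' : w.val.2 = u.val.1 := hu
  have hv' : w.val.2 = v.val.1 := hv
  exact line_tail (hu'.symm.trans hv')

lemma line_hI (hloop : ∀ v : V, ¬ A v v) : ∀ e : LineVertex A,
    e ∉ Nminus (LineAdj A) e := by
  intro e he
  have h2 : e.val.2 = e.val.1 := he
  have hp := e.property
  rw [h2] at hp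
  exact hloop _ hp

lemma line_hE (hreg : ∀ v, (Nminus A v).ncard = 2) :
    ∀ ⦃a b w : LineVertex A⦄, a ∈ Nminus (LineAdj A) w →
      b ∈ Nminus (LineAdj A) w →
      Nminus (LineAdj A) a = Nminus (LineAdj A) b → a = b := by
  intro a b w ha hb hab
  have ha' : a.val.2 = w.val.1 := ha
  have hb' : b.val.2 = w.val.1 := hb
  obtain ⟨f, hf⟩ := n_nonempty (line_hC hreg) a
  have hf1 : f.val.2 = a.val.1 := hf
  have hf' : f ∈ Nminus (LineAdj A) b := hab ▸ hf
  have hf2 : f.val.2 = b.val.1 := hf'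
  exact Subtype.ext (Prod.ext (hf1.symm.trans hf2) (ha'.trans hb'.symm))

theorem line_main [Fintype V] (hloop : ∀ v : V, ¬ A v v)
    (hreg : ∀ v : V, (Nminus A v).ncard = 2) :
    AdmitsIdCode (LineAdj A) 2 ↔ ¬ BadCfg (LineAdj A) :=
  abstract_id_iff (line_hC hreg) line_hD (line_hI hloop) (line_hE hreg)

end LineInst

end IdAux

/-- The line digraph of a strongly connected 2-in-regular loopless digraph admits a
`(1,≤2)`-identifying code iff it does not contain the forbidden configuration (iii). -/
theorem line_digraph_two_in_regular_id_code_iff {V : Type*} [Fintype V]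
    (A : V → V → Prop) (hloop : ∀ v : V, ¬ A v v) (hsc : StronglyConnected A)
    (hreg : ∀ v : V, (Nminus A v).ncard = 2) :
    AdmitsIdCode (LineAdj A) 2 ↔
      ¬ ∃ x x' y y' : LineVertex A,
        x ≠ x' ∧ x ≠ y ∧ x ≠ y' ∧ x' ≠ y ∧ x' ≠ y' ∧ y ≠ y' ∧
        Nminus (LineAdj A) x = {y, y'} ∧ Nminus (LineAdj A) y = {x, x'} ∧
        (Nminus (LineAdj A) x' ∩ Nminus (LineAdj A) y').Nonempty := by
  have h := abstract_id_iff (R := LineAdj A) (line_hC hreg) line_hD (line_hI hloop)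
    (line_hE hreg)
  unfold BadCfg at h
  exact h
end

section
/- For every integer n ≥ 3, the Kautz digraph K(n,2), i.e., the line digraph of the complete symmetric digraph K_{n+1} on n+1 vertices, admits a (1,≤2)-identifying code. -/
section Aux

lemma ncard_le_two_elim {α : Type*} {s : Set α} (hfin : s.Finite) {a b c : α}
    (ha : a ∈ s) (hb : b ∈ s) (hc : c ∈ s) (hab : a ≠ b) (hac : a ≠ c) (hbc : b ≠ c)
    (h2 : s.ncard ≤ 2) : False := by
  have h3 : ({a, b, c} : Set α).ncard = 3 :=
    Set.ncard_eq_three.mpr ⟨a, b, c, hab, hac, hbc, rfl⟩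
  have hle : ({a, b, c} : Set α).ncard ≤ s.ncard := by
    refine Set.ncard_le_ncard ?_ hfin
    intro x hx
    rcases hx with rfl | rfl | rfl <;> assumption
  omega

lemma mem_NminusSet_line_s8 {V : Type*} {A : V → V → Prop} {X : Set (LineVertex A)}
    {p : LineVertex A} :
    p ∈ NminusSet (LineAdj A) X ↔ ∃ q ∈ X, p = q ∨ p.val.2 = q.val.1 := by
  simp [NminusSet, NminusClosed, Nminus, LineAdj, Set.mem_insert_iff]

variable {n : ℕ}

local notation "Vn" => LineVertex (fun u v : Fin (n + 1) => u ≠ v)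
local notation "Rn" => LineAdj (fun u v : Fin (n + 1) => u ≠ v)

lemma kautz_tails (hn : 3 ≤ n) {X Y : Set Vn} (hY : Y.ncard ≤ 2)
    (hN : NminusSet Rn X = NminusSet Rn Y) {w : Fin (n + 1)}
    (hw : ∃ e ∈ X, e.val.1 = w) : ∃ f ∈ Y, f.val.1 = w := by
  obtain ⟨e, heX, hew⟩ := hw
  -- pick three distinct vertices different from w
  have hcard : 3 ≤ ({w}ᶜ : Finset (Fin (n + 1))).card := by
    rw [Finset.card_compl]
    simp only [Finset.card_singleton, Fintype.card_fin]
    omega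
  obtain ⟨t, hts, htc⟩ := Finset.exists_subset_card_eq hcard
  obtain ⟨u₁, u₂, u₃, h12, h13, h23, ht⟩ := Finset.card_eq_three.mp htc
  have hmem : ∀ u ∈ t, u ≠ w := by
    intro u hu
    have := hts hu
    simpa using this
  have hu₁ : u₁ ≠ w := hmem u₁ (by simp [ht])
  have hu₂ : u₂ ≠ w := hmem u₂ (by simp [ht])
  have hu₃ : u₃ ≠ w := hmem u₃ (by simp [ht])
  -- the three arcs (uᵢ, w)
  let p₁ : Vn := ⟨(u₁, w), hu₁⟩
  let p₂ : Vn := ⟨(u₂, w), hu₂⟩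
  let p₃ : Vn := ⟨(u₃, w), hu₃⟩
  have hp : ∀ p : Vn, p.val.2 = w → p ∈ NminusSet Rn Y := by
    intro p hpw
    rw [← hN]
    exact mem_NminusSet_line_s8.mpr ⟨e, heX, Or.inr (by rw [hpw, hew])⟩
  have key : ∀ p : Vn, p.val.2 = w → p ∈ Y ∨ ∃ f ∈ Y, f.val.1 = w := by
    intro p hpw
    obtain ⟨q, hqY, hq⟩ := mem_NminusSet_line_s8.mp (hp p hpw)
    rcases hq with rfl | hq
    · exact Or.inl hqY
    · exact Or.inr ⟨q, hqY, by rw [← hq, hpw]⟩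
  rcases key p₁ rfl with h1 | h1
  · rcases key p₂ rfl with h2 | h2
    · rcases key p₃ rfl with h3 | h3
      · exact (ncard_le_two_elim (Set.toFinite Y) h1 h2 h3
            (by simp [p₁, p₂, Subtype.ext_iff, Prod.ext_iff, h12])
            (by simp [p₁, p₃, Subtype.ext_iff, Prod.ext_iff, h13])
            (by simp [p₂, p₃, Subtype.ext_iff, Prod.ext_iff, h23]) hY).elim
      · exact h3
    · exact h2
  · exact h1

lemma kautz_subset (hn : 3 ≤ n) {X Y : Set Vn} (hX : X.ncard ≤ 2) (hY : Y.ncard ≤ 2)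
    (hN : NminusSet Rn X = NminusSet Rn Y) : X ⊆ Y := by
  intro e heX
  by_cases hb : ∃ f ∈ X, f.val.1 = e.val.2
  · -- e = (a,b), f = (b,c) ∈ X, so X = {e,f}
    obtain ⟨f, hfX, hfb⟩ := hb
    have hef : e ≠ f := by
      intro h
      exact e.prop (by rw [← hfb, ← h])
    have hXef : ∀ g ∈ X, g = e ∨ g = f := by
      intro g hgX
      by_contra hg
      push_neg at hg
      exact ncard_le_two_elim (Set.toFinite X) hgX heX hfX hg.1 hg.2 hef hX
    -- tails of Y contain e.val.1
    obtain ⟨h, hhY, hha⟩ := kautz_tails hn hY hN ⟨e, heX, rfl⟩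
    by_cases hhe : h = e
    · rwa [← hhe]
    · exfalso
      -- h.val.1 = e.val.1, h ≠ e, so h.val.2 ≠ e.val.2
      have hh2 : h.val.2 ≠ e.val.2 := by
        intro hcon
        exact hhe (Subtype.ext (Prod.ext hha hcon))
      -- h ∈ N⁻[Y] = N⁻[X]
      have hhN : h ∈ NminusSet Rn X := by
        rw [hN]
        exact mem_NminusSet_line_s8.mpr ⟨h, hhY, Or.inl rfl⟩
      obtain ⟨q, hqX, hq⟩ := mem_NminusSet_line_s8.mp hhN
      rcases hXef q hqX with rfl | rfl
      · rcases hq with rfl | hq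
        · exact hhe rfl
        · exact h.prop (by rw [hq, hha])
      · rcases hq with rfl | hq
        · exact e.prop (by rw [← hfb, ← hha])
        · exact hh2 (by rw [hq, hfb])
  · -- e's head is not a tail of X; then e ∈ Y directly
    have heN : e ∈ NminusSet Rn Y := by
      rw [← hN]
      exact mem_NminusSet_line_s8.mpr ⟨e, heX, Or.inl rfl⟩
    obtain ⟨q, hqY, hq⟩ := mem_NminusSet_line_s8.mp heN
    rcases hq with rfl | hq
    · exact hqY
    · exfalso
      obtain ⟨f, hfX, hff⟩ := kautz_tails hn hX hN.symm ⟨q, hqY, rfl⟩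
      exact hb ⟨f, hfX, by rw [hff, hq]⟩

end Aux

/-- For every `n ≥ 3`, the Kautz digraph `K(n,2)`, i.e. the line digraph of the complete
symmetric digraph on `n+1` vertices, admits a `(1,≤2)`-identifying code. -/
theorem kautz_n_two_admits_id_code_two (n : ℕ) (hn : 3 ≤ n) :
    AdmitsIdCode (LineAdj (fun u v : Fin (n + 1) => u ≠ v)) 2 := by
  intro X Y _ _ hX hY hne hN
  exact hne (Set.Subset.antisymm (kautz_subset hn hX hY hN) (kautz_subset hn hY hX hN.symm))
end

section
/- Let D be a strongly connected digraph without loops, with V(D) finite and minimum in-degree δ^-(D) ≥ 2. Then every (1,≤1)-identifying code C of the line digraph LD satisfies |C| ≥ |A(D)| − |V(D)|; in particular, the identifying number satisfies γ^ID(LD) ≥ |A(D)| − |V(D)|. -/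
/-- Every `(1,≤1)`-identifying code of the line digraph of a strongly connected loopless
digraph of minimum in-degree at least 2 has size at least `|A(D)| - |V(D)|`; in
particular the identifying number of the line digraph is at least `|A(D)| - |V(D)|`. -/
theorem line_digraph_id_number_lower_bound {V : Type*} [Fintype V]
    (A : V → V → Prop) (hloop : ∀ v : V, ¬ A v v) (hsc : StronglyConnected A)
    (hdeg : ∀ v : V, 2 ≤ (Nminus A v).ncard) :
    (∀ C : Set (LineVertex A), IsIdCode (LineAdj A) C →
      {p : V × V | A p.1 p.2}.ncard - Nat.card V ≤ C.ncard) ∧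
    {p : V × V | A p.1 p.2}.ncard - Nat.card V ≤ idNumber (LineAdj A) := by
    classical
  have key : ∀ C : Set (LineVertex A), IsIdCode (LineAdj A) C →
      {p : V × V | A p.1 p.2}.ncard - Nat.card V ≤ C.ncard := by
    intro C hC
    have hinj : Set.InjOn (fun e : LineVertex A => e.val.1) Cᶜ := by
      intro e he f hf hef
      by_contra hne
      apply hC.2 e f hne
      have hN : Nminus (LineAdj A) e = Nminus (LineAdj A) f := by
        ext g; simp only [Nminus, LineAdj, Set.mem_setOf_eq]
        exact ⟨fun h => h.trans hef, fun h => h.trans hef.symm⟩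
      rw [NminusClosed, NminusClosed, hN,
        Set.insert_inter_of_notMem he, Set.insert_inter_of_notMem hf]
    have h1 : (Cᶜ : Set (LineVertex A)).ncard ≤ Nat.card V := by
      calc (Cᶜ : Set (LineVertex A)).ncard
          = ((fun e : LineVertex A => e.val.1) '' Cᶜ).ncard :=
            (Set.ncard_image_of_injOn hinj).symm
        _ ≤ (Set.univ : Set V).ncard :=
            Set.ncard_le_ncard (Set.subset_univ _) Set.finite_univ
        _ = Nat.card V := Set.ncard_univ V
    have h2 : C.ncard + (Cᶜ : Set (LineVertex A)).ncard = Nat.card (LineVertex A) :=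
      Set.ncard_add_ncard_compl C
    have h3 : {p : V × V | A p.1 p.2}.ncard = Nat.card (LineVertex A) :=
      (Nat.card_coe_set_eq _).symm
    omega
  refine ⟨key, ?_⟩
  have huniv : IsIdCode (LineAdj A) (Set.univ : Set (LineVertex A)) := by
    constructor
    · intro v; exact Or.inl trivial
    · intro x y hxy
      simp only [Set.inter_univ]
      intro hEq
      by_cases h : x.val.1 = y.val.1
      · have hx : x ∉ Nminus (LineAdj A) x := by
          intro hmem
          have h2 : x.val.2 = x.val.1 := hmem
          exact hloop x.val.1 (by have := x.prop; rwa [h2] at this)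
        have hNx : Nminus (LineAdj A) x = Nminus (LineAdj A) y := by
          ext g; simp only [Nminus, LineAdj, Set.mem_setOf_eq]
          exact ⟨fun hg => hg.trans h, fun hg => hg.trans h.symm⟩
        rw [NminusClosed, NminusClosed, hNx] at hEq
        have hxmem : x ∈ insert y (Nminus (LineAdj A) y) := hEq ▸ Set.mem_insert x _
        rcases hxmem with h' | h'
        · exact hxy h'
        · rw [← hNx] at h'; exact hx h'
      · obtain ⟨u1, hu1, u2, hu2, hne⟩ :
            ∃ a ∈ Nminus A x.val.1, ∃ b ∈ Nminus A x.val.1, a ≠ b :=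
          (Set.one_lt_ncard (Set.toFinite _)).mp (by have := hdeg x.val.1; omega)
        set g1 : LineVertex A := ⟨(u1, x.val.1), hu1⟩
        set g2 : LineVertex A := ⟨(u2, x.val.1), hu2⟩
        have hg12 : g1 ≠ g2 := fun hg => hne (congrArg (fun e => e.val.1) hg)
        obtain ⟨g, hgv, hgy⟩ : ∃ g : LineVertex A, g.val.2 = x.val.1 ∧ g ≠ y := by
          by_cases h1 : g1 = y
          · exact ⟨g2, rfl, fun hg => hg12 (h1.trans hg.symm)⟩
          · exact ⟨g1, rfl, h1⟩
        have hgmem : g ∈ NminusClosed (LineAdj A) x := Or.inr hgv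
        rw [hEq] at hgmem
        rcases hgmem with h' | h'
        · exact hgy h'
        · exact h ((hgv.symm.trans (h' : g.val.2 = y.val.1)))
  have hmem : idNumber (LineAdj A) ∈
      {n | ∃ C : Set (LineVertex A), IsIdCode (LineAdj A) C ∧ C.ncard = n} :=
    Nat.sInf_mem ⟨(Set.univ : Set (LineVertex A)).ncard, Set.univ, huniv, rfl⟩
  obtain ⟨C, hCid, hCeq⟩ := hmem
  exact hCeq ▸ key C hCid
end

section
/- Let D be a strongly connected digraph without loops, with V(D) finite of order at least 3, and let C ⊆ A(D). Then C is an arc-identifying code of D if and only if C satisfies both: (i) for every vertex v, |ω^+(v) \ C| ≤ 1, and if |ω^+(v) \ C| = 1 then ω^-(v) ∩ C ≠ ∅; and (ii) for every arc (u,v) ∈ C, if (v,u) ∈ C or |ω^+(v) \ C| = 1, then ((ω^-(v) ∪ ω^-(u)) \ {(u,v),(v,u)}) ∩ C ≠ ∅. -/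
private lemma arc_aux {V : Type*} [Fintype V] {A : V → V → Prop} {C : Set (V × V)}
    (h1 : ∀ v : V, (omegaPlus A v \ C).ncard ≤ 1 ∧
          ((omegaPlus A v \ C).ncard = 1 → (omegaMinus A v ∩ C).Nonempty))
    (h2 : ∀ u v : V, (u, v) ∈ C →
          ((v, u) ∈ C ∨ (omegaPlus A v \ C).ncard = 1) →
          (((omegaMinus A v ∪ omegaMinus A u) \ {(u, v), (v, u)}) ∩ C).Nonempty)
    {u v w z : V} (hp : A u v) (hq : A w z)
    (hpC : (u, v) ∈ C) (hqC : (w, z) ∉ C) (hpq : (u, v) ≠ (w, z)) (huw : u ≠ w)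
    (heq : insert (u, v) (omegaMinus A u) ∩ C = insert (w, z) (omegaMinus A w) ∩ C) :
    False := by
  have hvw : v = w := by
    have hm : (u, v) ∈ insert (w, z) (omegaMinus A w) ∩ C := by
      rw [← heq]; exact ⟨Set.mem_insert _ _, hpC⟩
    rcases Set.mem_insert_iff.mp hm.1 with h | h
    · exact absurd h hpq
    · exact h.2
  subst hvw
  have hone : (omegaPlus A v \ C).ncard = 1 :=
    Nat.le_antisymm (h1 v).1
      ((Set.ncard_pos (Set.toFinite _)).mpr ⟨(v, z), ⟨hq, rfl⟩, hqC⟩)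
  obtain ⟨c, ⟨hcU, hcN⟩, hcC⟩ := h2 u v hpC (Or.inr hone)
  have hcuv : c ≠ (u, v) := fun h => hcN (by rw [h]; exact Set.mem_insert _ _)
  have hRHS : insert (v, z) (omegaMinus A v) ∩ C = omegaMinus A v ∩ C :=
    Set.insert_inter_of_notMem hqC
  rcases hcU with hcv | hcu
  · have hm : c ∈ insert (u, v) (omegaMinus A u) ∩ C := by
      rw [heq, hRHS]; exact ⟨hcv, hcC⟩
    rcases Set.mem_insert_iff.mp hm.1 with h | h
    · exact hcuv h
    · exact huw (h.2.symm.trans hcv.2)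
  · have hm : c ∈ omegaMinus A v ∩ C := by
      rw [← hRHS, ← heq]; exact ⟨Set.mem_insert_of_mem _ hcu, hcC⟩
    exact huw (hcu.2.symm.trans hm.1.2)

/-- Characterization of arc-identifying codes: a set of arcs `C` of a strongly connected
loopless digraph of order at least 3 is an arc-identifying code iff it satisfies
conditions (i) and (ii). -/
theorem arc_id_code_characterization {V : Type*} [Fintype V]
    (A : V → V → Prop) (hloop : ∀ v : V, ¬ A v v) (hsc : StronglyConnected A)
    (hcard : 3 ≤ Nat.card V) (C : Set (V × V)) (hC : ∀ p ∈ C, A p.1 p.2) :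
    IsArcIdCode A C ↔
      ((∀ v : V, (omegaPlus A v \ C).ncard ≤ 1 ∧
          ((omegaPlus A v \ C).ncard = 1 → (omegaMinus A v ∩ C).Nonempty)) ∧
       (∀ u v : V, (u, v) ∈ C →
          ((v, u) ∈ C ∨ (omegaPlus A v \ C).ncard = 1) →
          (((omegaMinus A v ∪ omegaMinus A u) \ {(u, v), (v, u)}) ∩ C).Nonempty)) := by
  have hfin : ∀ s : Set (V × V), s.Finite := fun s => s.toFinite
  constructor
  · rintro ⟨hdom, hsep⟩
    refine ⟨fun v => ⟨?_, ?_⟩, ?_⟩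
    · -- |ω⁺(v) \ C| ≤ 1
      by_contra h
      push_neg at h
      obtain ⟨a, ha, b, hb, hab⟩ := (Set.one_lt_ncard (hfin _)).mp h
      apply hsep a b ha.1.1 hb.1.1 hab
      rw [ha.1.2, hb.1.2, Set.insert_inter_of_notMem ha.2,
        Set.insert_inter_of_notMem hb.2]
    · -- if |ω⁺(v) \ C| = 1 then ω⁻(v) ∩ C ≠ ∅
      intro hone
      obtain ⟨a, ha⟩ := Set.ncard_eq_one.mp hone
      have hma : a ∈ omegaPlus A v \ C := by rw [ha]; exact rfl
      obtain ⟨c, hc1, hc2⟩ := hdom a hma.1.1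
      rcases Set.mem_insert_iff.mp hc1 with rfl | hc1
      · exact absurd hc2 hma.2
      · exact ⟨c, hma.1.2 ▸ hc1, hc2⟩
    · -- condition (ii)
      intro u v huv hor
      have huvA : A u v := hC _ huv
      have hne : u ≠ v := fun h => hloop v (h ▸ huvA)
      by_contra hemp
      rw [Set.not_nonempty_iff_eq_empty] at hemp
      have hsub : ∀ x ∈ C, x ∈ omegaMinus A u ∨ x ∈ omegaMinus A v →
          x = (u, v) ∨ x = (v, u) := by
        intro x hxC hx
        by_contra hcon
        push_neg at hcon
        have hxmem : x ∈ ((omegaMinus A v ∪ omegaMinus A u) \ {(u, v), (v, u)}) ∩ C :=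
          ⟨⟨hx.symm, by simp [hcon.1, hcon.2]⟩, hxC⟩
        rw [hemp] at hxmem
        exact hxmem
      by_cases hvuC : (v, u) ∈ C
      · -- case (v,u) ∈ C
        have hvuA : A v u := hC _ hvuC
        apply hsep (u, v) (v, u) huvA hvuA
          (fun h => hne (congrArg Prod.fst h))
        ext x
        constructor
        · rintro ⟨hx1, hxC⟩
          refine ⟨?_, hxC⟩
          rcases Set.mem_insert_iff.mp hx1 with rfl | hx1
          · exact Set.mem_insert_of_mem _ ⟨huvA, rfl⟩
          · rcases hsub x hxC (Or.inl hx1) with rfl | rfl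
            · exact Set.mem_insert_of_mem _ ⟨huvA, rfl⟩
            · exact Set.mem_insert _ _
        · rintro ⟨hx1, hxC⟩
          refine ⟨?_, hxC⟩
          rcases Set.mem_insert_iff.mp hx1 with rfl | hx1
          · exact Set.mem_insert_of_mem _ ⟨hvuA, rfl⟩
          · rcases hsub x hxC (Or.inr hx1) with rfl | rfl
            · exact Set.mem_insert _ _
            · exact Set.mem_insert_of_mem _ ⟨hvuA, rfl⟩
      · -- case (v,u) ∉ C, so |ω⁺(v) \ C| = 1
        have hone : (omegaPlus A v \ C).ncard = 1 := hor.resolve_left hvuC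
        obtain ⟨a, ha⟩ := Set.ncard_eq_one.mp hone
        have hma : a ∈ omegaPlus A v \ C := by rw [ha]; exact rfl
        have haA : A a.1 a.2 := hma.1.1
        have hav : a.1 = v := hma.1.2
        apply hsep a (u, v) haA huvA
          (fun h => hne (by rw [h] at hav; exact hav))
        rw [hav, Set.insert_inter_of_notMem hma.2]
        ext x
        constructor
        · rintro ⟨hx1, hxC⟩
          rcases hsub x hxC (Or.inr hx1) with rfl | rfl
          · exact ⟨Set.mem_insert _ _, hxC⟩
          · exact absurd hx1.2 hne
        · rintro ⟨hx1, hxC⟩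
          rcases Set.mem_insert_iff.mp hx1 with rfl | hx1
          · exact ⟨⟨huvA, rfl⟩, hxC⟩
          · rcases hsub x hxC (Or.inl hx1) with rfl | rfl
            · exact absurd hx1.2 (Ne.symm hne)
            · exact absurd hxC hvuC
  · rintro ⟨h1, h2⟩
    have hdom : ∀ p : V × V, A p.1 p.2 → ((insert p (omegaMinus A p.1)) ∩ C).Nonempty := by
      intro p hp
      by_cases hpC : p ∈ C
      · exact ⟨p, Set.mem_insert _ _, hpC⟩
      · have hpos : 0 < (omegaPlus A p.1 \ C).ncard :=
          (Set.ncard_pos (hfin _)).mpr ⟨p, ⟨hp, rfl⟩, hpC⟩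
        obtain ⟨c, hc1, hc2⟩ := (h1 p.1).2 (Nat.le_antisymm (h1 p.1).1 hpos)
        exact ⟨c, Set.mem_insert_of_mem _ hc1, hc2⟩
    refine ⟨hdom, ?_⟩
    rintro ⟨u, v⟩ ⟨w, z⟩ hp hq hpq heq
    dsimp only at hp hq heq
    have hneuv : u ≠ v := fun h => hloop v (h ▸ hp)
    have hnewz : w ≠ z := fun h => hloop z (h ▸ hq)
    by_cases huw : u = w
    · subst huw
      by_cases hpC : (u, v) ∈ C
      · have hm : (u, v) ∈ insert (u, z) (omegaMinus A u) ∩ C := by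
          rw [← heq]; exact ⟨Set.mem_insert _ _, hpC⟩
        rcases Set.mem_insert_iff.mp hm.1 with h | h
        · exact hpq h
        · exact hneuv h.2.symm
      · by_cases hqC : (u, z) ∈ C
        · have hm : (u, z) ∈ insert (u, v) (omegaMinus A u) ∩ C := by
            rw [heq]; exact ⟨Set.mem_insert _ _, hqC⟩
          rcases Set.mem_insert_iff.mp hm.1 with h | h
          · exact hpq h.symm
          · exact hnewz h.2.symm
        · have h2lt : 1 < (omegaPlus A u \ C).ncard :=
            (Set.one_lt_ncard (hfin _)).mpr
              ⟨(u, v), ⟨⟨hp, rfl⟩, hpC⟩, (u, z), ⟨⟨hq, rfl⟩, hqC⟩, hpq⟩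
          exact absurd (h1 u).1 (by omega)
    · by_cases hpC : (u, v) ∈ C
      · by_cases hqC : (w, z) ∈ C
        · -- both in C : v = w and z = u
          have hvw : v = w := by
            have hm : (u, v) ∈ insert (w, z) (omegaMinus A w) ∩ C := by
              rw [← heq]; exact ⟨Set.mem_insert _ _, hpC⟩
            rcases Set.mem_insert_iff.mp hm.1 with h | h
            · exact absurd h hpq
            · exact h.2
          subst hvw
          have hzu : u = z := by
            have hm : (v, z) ∈ insert (u, v) (omegaMinus A u) ∩ C := by
              rw [heq]; exact ⟨Set.mem_insert _ _, hqC⟩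
            rcases Set.mem_insert_iff.mp hm.1 with h | h
            · exact absurd h.symm hpq
            · exact h.2.symm
          subst hzu
          obtain ⟨c, ⟨hcU, hcN⟩, hcC⟩ := h2 u v hpC (Or.inl hqC)
          have hcuv : c ≠ (u, v) := fun h => hcN (by rw [h]; exact Set.mem_insert _ _)
          have hcvu : c ≠ (v, u) := fun h =>
            hcN (by rw [h]; exact Set.mem_insert_of_mem _ rfl)
          rcases hcU with hcv | hcu
          · have hm : c ∈ insert (u, v) (omegaMinus A u) ∩ C := by
              rw [heq]; exact ⟨Set.mem_insert_of_mem _ hcv, hcC⟩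
            rcases Set.mem_insert_iff.mp hm.1 with h | h
            · exact hcuv h
            · exact huw (h.2.symm.trans hcv.2)
          · have hm : c ∈ insert (v, u) (omegaMinus A v) ∩ C := by
              rw [← heq]; exact ⟨Set.mem_insert_of_mem _ hcu, hcC⟩
            rcases Set.mem_insert_iff.mp hm.1 with h | h
            · exact hcvu h
            · exact huw (hcu.2.symm.trans h.2)
        · exact arc_aux h1 h2 hp hq hpC hqC hpq huw heq
      · by_cases hqC : (w, z) ∈ C
        · exact arc_aux h1 h2 hq hp hqC hpC (Ne.symm hpq) (Ne.symm huw) heq.symm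
        · -- both not in C
          have hpos : 0 < (omegaPlus A u \ C).ncard :=
            (Set.ncard_pos (hfin _)).mpr ⟨(u, v), ⟨hp, rfl⟩, hpC⟩
          obtain ⟨c, hc1, hc2⟩ := (h1 u).2 (Nat.le_antisymm (h1 u).1 hpos)
          have hm : c ∈ omegaMinus A w ∩ C := by
            rw [← Set.insert_inter_of_notMem hqC, ← heq,
              Set.insert_inter_of_notMem hpC]
            exact ⟨hc1, hc2⟩
          exact huw (hc1.2.symm.trans hm.1.2)
end

section
/- Let D be a strongly connected digraph without loops, with V(D) finite, containing a Hamiltonian directed cycle, with minimum in-degree δ^-(D) ≥ 3 and minimum out-degree δ^+(D) ≥ 2. Then the identifying number of its line digraph satisfies γ^ID(LD) = |A(D)| − |V(D)|. -/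
private lemma aux_lower_bound {V : Type*} [Fintype V] (A : V → V → Prop)
    (C : Set (LineVertex A)) (hC : IsIdCode (LineAdj A) C) :
    {p : V × V | A p.1 p.2}.ncard - Nat.card V ≤ C.ncard := by
  classical
  have key : ∀ x : LineVertex A, x ∉ C →
      NminusClosed (LineAdj A) x ∩ C = {g : LineVertex A | g.val.2 = x.val.1} ∩ C := by
    intro x hx
    ext y
    simp only [NminusClosed, Nminus, LineAdj, Set.mem_inter_iff, Set.mem_insert_iff,
      Set.mem_setOf_eq]
    constructor
    · rintro ⟨rfl | hy1, hy2⟩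
      · exact absurd hy2 hx
      · exact ⟨hy1, hy2⟩
    · rintro ⟨hy1, hy2⟩
      exact ⟨Or.inr hy1, hy2⟩
  have hinj : Set.InjOn (fun e : LineVertex A => e.val.1) Cᶜ := by
    intro e he f hf hef
    by_contra hne
    apply hC.2 e f hne
    rw [key e he, key f hf]
    have hef' : e.val.1 = f.val.1 := hef
    rw [hef']
  have h1 : (Cᶜ).ncard ≤ Nat.card V := by
    calc (Cᶜ).ncard = ((fun e : LineVertex A => e.val.1) '' Cᶜ).ncard :=
          (Set.ncard_image_of_injOn hinj).symm
      _ ≤ (Set.univ : Set V).ncard := Set.ncard_le_ncard (Set.subset_univ _) Set.finite_univ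
      _ = Nat.card V := Set.ncard_univ V
  have h2 : C.ncard + (Cᶜ).ncard = Nat.card (LineVertex A) :=
    Set.ncard_add_ncard_compl C
  have h3 : Nat.card (LineVertex A) = {p : V × V | A p.1 p.2}.ncard :=
    Nat.card_coe_set_eq {p : V × V | A p.1 p.2}
  omega

private lemma aux_upper_bound {V : Type*} [Fintype V] (A : V → V → Prop)
    (hloop : ∀ v : V, ¬ A v v)
    (φ : ZMod (Fintype.card V) ≃ V) (hφ : ∀ i, A (φ i) (φ (i + 1)))
    (hin : ∀ v : V, 3 ≤ (Nminus A v).ncard) :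
    ∃ C : Set (LineVertex A), IsIdCode (LineAdj A) C ∧
      C.ncard = {p : V × V | A p.1 p.2}.ncard - Nat.card V := by
  classical
  set g : ZMod (Fintype.card V) → LineVertex A :=
    fun i => ⟨(φ i, φ (i + 1)), by exact hφ i⟩ with hg
  have hginj : Function.Injective g := by
    intro i j hij
    have : φ i = φ j := congrArg (fun e : LineVertex A => e.val.1) hij
    exact φ.injective this
  set C : Set (LineVertex A) := (Set.range g)ᶜ with hC
  set T : V → Set (LineVertex A) := fun u => {f : LineVertex A | f.val.2 = u} with hT
  have hTC : ∀ e : LineVertex A, NminusClosed (LineAdj A) e = insert e (T e.val.1) := fun e => rfl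
  have hkey : ∀ u : V, 2 ≤ (T u ∩ C).ncard := by
    intro u
    set w₀ : V := φ (φ.symm u - 1) with hw₀
    have hsub : Nminus A u \ {w₀} ⊆ (fun f : LineVertex A => f.val.1) '' (T u ∩ C) := by
      rintro w ⟨hw, hww₀⟩
      refine ⟨⟨(w, u), hw⟩, ⟨rfl, ?_⟩, rfl⟩
      rintro ⟨i, hi⟩
      apply hww₀
      have h2 : φ (i + 1) = u := congrArg (fun e : LineVertex A => e.val.2) hi
      have h1 : φ i = w := congrArg (fun e : LineVertex A => e.val.1) hi
      have h3 : i + 1 = φ.symm u := by rw [← h2, Equiv.symm_apply_apply]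
      have h4 : i = φ.symm u - 1 := eq_sub_of_add_eq h3
      show w = w₀
      rw [hw₀, ← h4, h1]
    have hinjT : Set.InjOn (fun f : LineVertex A => f.val.1) (T u ∩ C) := by
      rintro a ⟨ha, -⟩ b ⟨hb, -⟩ hab
      apply Subtype.ext
      apply Prod.ext hab
      exact ha.trans hb.symm
    have h5 : (Nminus A u).ncard ≤ (Nminus A u \ {w₀}).ncard + 1 := by
      have hsub2 : Nminus A u ⊆ (Nminus A u \ {w₀}) ∪ {w₀} := by
        intro x hx
        by_cases h : x = w₀
        · exact Or.inr h
        · exact Or.inl ⟨hx, h⟩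
      calc (Nminus A u).ncard ≤ ((Nminus A u \ {w₀}) ∪ {w₀}).ncard :=
            Set.ncard_le_ncard hsub2 (Set.toFinite _)
        _ ≤ (Nminus A u \ {w₀}).ncard + ({w₀} : Set V).ncard := Set.ncard_union_le _ _
        _ = (Nminus A u \ {w₀}).ncard + 1 := by rw [Set.ncard_singleton]
    have h6 : (Nminus A u \ {w₀}).ncard ≤ ((fun f : LineVertex A => f.val.1) '' (T u ∩ C)).ncard :=
      Set.ncard_le_ncard hsub (Set.toFinite _)
    have h7 := Set.ncard_image_of_injOn hinjT
    have h8 := hin u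
    omega
  have honeside : ∀ e f : LineVertex A, e.val.1 = f.val.1 → e ≠ f → e ∈ C →
      NminusClosed (LineAdj A) e ∩ C ≠ NminusClosed (LineAdj A) f ∩ C := by
    intro e f htail hne heC heq
    have he : e ∈ NminusClosed (LineAdj A) e ∩ C := ⟨Set.mem_insert _ _, heC⟩
    rw [heq, hTC f] at he
    rcases he.1 with h | h
    · exact hne h
    · have hloopv : e.val.2 = e.val.1 := by
        have : e.val.2 = f.val.1 := h
        rw [this, ← htail]
      exact hloop e.val.1 (by have := e.prop; rwa [hloopv] at this)
  refine ⟨C, ⟨?_, ?_⟩, ?_⟩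
  · intro v
    right
    obtain ⟨a, b, ha, hb, hab⟩ := (Set.one_lt_ncard_iff (Set.toFinite _)).mp
      (lt_of_lt_of_le one_lt_two (hkey v.val.1))
    exact ⟨a, ha.2, ha.1⟩
  · intro e f hne
    by_cases htail : e.val.1 = f.val.1
    · by_cases heC : e ∈ C
      · exact honeside e f htail hne heC
      · by_cases hfC : f ∈ C
        · intro h
          exact honeside f e htail.symm hne.symm hfC h.symm
        · exfalso
          apply hne
          rw [hC, Set.notMem_compl_iff] at heC hfC
          obtain ⟨i, rfl⟩ := heC
          obtain ⟨j, rfl⟩ := hfC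
          have : φ i = φ j := htail
          rw [φ.injective this]
    · intro heq
      obtain ⟨a, b, ha, hb, hab⟩ := (Set.one_lt_ncard_iff (Set.toFinite _)).mp
        (lt_of_lt_of_le one_lt_two (hkey e.val.1))
      have haf : a = f := by
        have h1 : a ∈ NminusClosed (LineAdj A) e ∩ C :=
          ⟨Set.mem_insert_iff.mpr (Or.inr ha.1), ha.2⟩
        rw [heq, hTC f] at h1
        rcases h1.1 with h | h
        · exact h
        · exact absurd (ha.1.symm.trans h) htail
      have hbf : b = f := by
        have h1 : b ∈ NminusClosed (LineAdj A) e ∩ C :=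
          ⟨Set.mem_insert_iff.mpr (Or.inr hb.1), hb.2⟩
        rw [heq, hTC f] at h1
        rcases h1.1 with h | h
        · exact h
        · exact absurd (hb.1.symm.trans h) htail
      exact hab (haf.trans hbf.symm)
  · have h5 : (Cᶜ).ncard = Fintype.card V := by
      rw [hC, compl_compl, ← Nat.card_coe_set_eq, Nat.card_range_of_injective hginj,
        Nat.card_zmod]
    have h6 : C.ncard + (Cᶜ).ncard = Nat.card (LineVertex A) := Set.ncard_add_ncard_compl C
    have h7 : Nat.card (LineVertex A) = {p : V × V | A p.1 p.2}.ncard :=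
      Nat.card_coe_set_eq {p : V × V | A p.1 p.2}
    have h8 : Nat.card V = Fintype.card V := Nat.card_eq_fintype_card
    omega

/-- The identifying number of the line digraph of a Hamiltonian strongly connected
digraph of minimum in-degree at least 3 and minimum out-degree at least 2 equals
`|A(D)| - |V(D)|`. -/
theorem hamiltonian_line_digraph_id_number {V : Type*} [Fintype V]
    (A : V → V → Prop) (hloop : ∀ v : V, ¬ A v v) (hsc : StronglyConnected A)
    (hham : ∃ φ : ZMod (Fintype.card V) ≃ V, ∀ i : ZMod (Fintype.card V), A (φ i) (φ (i + 1)))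
    (hin : ∀ v : V, 3 ≤ (Nminus A v).ncard) (hout : ∀ v : V, 2 ≤ (Nplus A v).ncard) :
    idNumber (LineAdj A) = {p : V × V | A p.1 p.2}.ncard - Nat.card V := by
  classical
  obtain ⟨φ, hφ⟩ := hham
  obtain ⟨C, hCcode, hCcard⟩ := aux_upper_bound A hloop φ hφ hin
  have hmem : {p : V × V | A p.1 p.2}.ncard - Nat.card V ∈
      {n | ∃ C : Set (LineVertex A), IsIdCode (LineAdj A) C ∧ C.ncard = n} :=
    ⟨C, hCcode, hCcard⟩
  refine le_antisymm (Nat.sInf_le hmem) (le_csInf ⟨_, hmem⟩ ?_)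
  rintro m ⟨C', hC', rfl⟩
  exact aux_lower_bound A C' hC'
end
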